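/- arXiv:1509.01675 — 6 statements merged into one kernel-verified Lean document; each statement's English description precedes it below -/
import Mathlib

section
/- Let G = (X,Y,E) be a bipartite undirected graph with parts X and Y that is d-degenerate. Then the sum of deg_G(y) over all vertices y ∈ Y with deg_G(y) > 2d is at most 2d·|X|. -/
namespace OutBranching

variable {V : Type}

/-! ### Basic digraph notions -/

/-- `b` is reachable from `a` by a directed path. -/
def Reaches (E : V → V → Prop) (a b : V) : Prop := Relation.ReflTransGen E a b

/-- The rooted digraph `(E, r)` is connected: every vertex is reachable from the root. -/
def Connected (E : V → V → Prop) (r : V) : Prop := ∀ v, Reaches E r v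

/-- `b` is reachable from `a` by a directed path avoiding the vertex set `S`. -/
def ReachAvoid (E : V → V → Prop) (S : Set V) (a b : V) : Prop :=
  a ∉ S ∧ b ∉ S ∧ Relation.ReflTransGen (fun x y => E x y ∧ x ∉ S ∧ y ∉ S) a b

/-- A cut-vertex: a vertex `v ≠ r` whose removal makes some (other) vertex unreachable
from the root `r`. -/
def IsCutVertex (E : V → V → Prop) (r v : V) : Prop :=
  v ≠ r ∧ ∃ u, u ≠ v ∧ ¬ ReachAvoid E {v} r u

/-- The set of cut-vertices. -/
def cutVertices (E : V → V → Prop) (r : V) : Set V := {v | IsCutVertex E r v}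

/-- The edge relation obtained by deleting the single edge `(u,v)`. -/
def delEdge (E : V → V → Prop) (u v : V) : V → V → Prop :=
  fun a b => E a b ∧ ¬ (a = u ∧ b = v)

/-- A cut-edge: an edge `(u,v)` whose deletion makes some vertex unreachable from `r`. -/
def IsCutEdge (E : V → V → Prop) (r u v : V) : Prop :=
  E u v ∧ ∃ w, ¬ Reaches (delEdge E u v) r w

/-- A lonely cut-edge: no other cut-edge has the same tail. -/
def IsLonelyCutEdge (E : V → V → Prop) (r u v : V) : Prop :=
  IsCutEdge E r u v ∧ ∀ w, IsCutEdge E r u w → w = v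

/-- A branching cut-edge: some other cut-edge has the same tail. -/
def IsBranchingCutEdge (E : V → V → Prop) (r u v : V) : Prop :=
  IsCutEdge E r u v ∧ ∃ w, w ≠ v ∧ IsCutEdge E r u w

/-- In-neighbourhood. -/
def inN (E : V → V → Prop) (v : V) : Set V := {u | E u v}

/-- Out-neighbourhood. -/
def outN (E : V → V → Prop) (v : V) : Set V := {w | E v w}

/-- Private neighbors of `u`: out-neighbors of `u` not reachable from `r` in `D - u`. -/
def privateNbrs (E : V → V → Prop) (r u : V) : Set V :=
  {v | E u v ∧ ¬ ReachAvoid E {u} r v}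

/-- A special vertex: in-degree at least 3, or an incoming simple edge. -/
def Special (E : V → V → Prop) (v : V) : Prop :=
  3 ≤ (inN E v).ncard ∨ ∃ u, E u v ∧ ¬ E v u

/-- The set of special vertices. -/
def sp (E : V → V → Prop) : Set V := {v | Special E v}

/-! ### Outbranchings and `maxleaf` -/

/-- `T` is an outbranching of `(E, r)`: a spanning subdigraph in which every vertex is
reachable from `r`, every vertex other than `r` has in-degree exactly 1,
and `r` has in-degree 0. -/
structure IsOutbranching (E : V → V → Prop) (r : V) (T : V → V → Prop) : Prop where
  sub : ∀ ⦃a b⦄, T a b → E a b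
  reach : ∀ v, Reaches T r v
  indeg : ∀ v, v ≠ r → ∃! u, T u v
  rootIndeg : ∀ u, ¬ T u r

/-- The number of leaves (vertices of out-degree 0) of `T`. -/
noncomputable def leafCount (T : V → V → Prop) : ℕ := {v | ∀ w, ¬ T v w}.ncard

/-- The maximum number of leaves over all outbranchings of `(E, r)`. -/
noncomputable def maxleaf (E : V → V → Prop) (r : V) : ℕ :=
  sSup {n | ∃ T, IsOutbranching E r T ∧ leafCount T = n}

/-! ### The reduction rules (each `RuleᵢNA` says that rule i does NOT apply) -/

/-- Rule 1 does not apply: every vertex is reachable from the root. -/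
def Rule1NA (E : V → V → Prop) (r : V) : Prop := Connected E r

/-- Rule 2 does not apply: no cut-vertex has exactly one incoming edge,
and no cut-vertex has exactly one outgoing edge. -/
def Rule2NA (E : V → V → Prop) (r : V) : Prop :=
  ∀ v, IsCutVertex E r v → ¬ (∃! u, E u v) ∧ ¬ (∃! w, E v w)

/-- Rule 3 does not apply: there is no proper bipath of length 4, i.e. no sequence
of 5 distinct vertices `a b c d e` whose three internal vertices have their in- and
out-neighbourhoods equal to the pair of adjacent vertices on the sequence. -/
def Rule3NA (E : V → V → Prop) : Prop :=
  ¬ ∃ a b c d e : V, List.Pairwise (· ≠ ·) [a, b, c, d, e] ∧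
    (∀ w, (E w b ↔ w = a ∨ w = c) ∧ (E b w ↔ w = a ∨ w = c)) ∧
    (∀ w, (E w c ↔ w = b ∨ w = d) ∧ (E c w ↔ w = b ∨ w = d)) ∧
    (∀ w, (E w d ↔ w = c ∨ w = e) ∧ (E d w ↔ w = c ∨ w = e))

/-- Rule 4 does not apply: there is no vertex `x` with an in-neighbor `y` such that
removing all in-neighbors of `x` other than `y` disconnects `y` from `r`. -/
def Rule4NA (E : V → V → Prop) (r : V) : Prop :=
  ¬ ∃ x y, E y x ∧ ¬ ReachAvoid E {v | E v x ∧ v ≠ y} r y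

/-- Rule 5 does not apply: there are no two cut-edges `(x₁,y₁)`, `(x₂,y₂)` with both
`(x₁,x₂)` and `(x₂,x₁)` being edges. -/
def Rule5NA (E : V → V → Prop) (r : V) : Prop :=
  ¬ ∃ x₁ y₁ x₂ y₂, IsCutEdge E r x₁ y₁ ∧ IsCutEdge E r x₂ y₂ ∧ E x₁ x₂ ∧ E x₂ x₁

/-- Rule 6 does not apply: there is no cut-edge `(u,v)` with `(v,u)` an edge. -/
def Rule6NA (E : V → V → Prop) (r : V) : Prop :=
  ¬ ∃ u v, IsCutEdge E r u v ∧ E v u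

/-- Reduction rules R1–R4 do not apply. -/
def Reduced4 (E : V → V → Prop) (r : V) : Prop :=
  Rule1NA E r ∧ Rule2NA E r ∧ Rule3NA E ∧ Rule4NA E r

/-- Reduction rules R1–R6 do not apply. -/
def Reduced6 (E : V → V → Prop) (r : V) : Prop :=
  Reduced4 E r ∧ Rule5NA E r ∧ Rule6NA E r

/-! ### Contraction -/

/-- The setoid on `V` generated by identifying the endpoints of the edges in `C`. -/
def contractSetoid (C : V → V → Prop) : Setoid V := Relation.EqvGen.setoid C

/-- Vertices of the digraph obtained by contracting all edges in `C`. -/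
def CVert (C : V → V → Prop) : Type := Quotient (contractSetoid C)

/-- The projection of a vertex to the contracted digraph. -/
def cmk (C : V → V → Prop) (x : V) : CVert C := Quotient.mk (contractSetoid C) x

/-- The edge relation of the digraph obtained from `E` by contracting all edges in `C`
(loops and parallel edges are discarded). -/
def contractE (E : V → V → Prop) (C : V → V → Prop) : CVert C → CVert C → Prop :=
  fun a b => a ≠ b ∧ ∃ x y, cmk C x = a ∧ cmk C y = b ∧ E x y

/-- The relation consisting of a single edge `(u,v)` (used for contracting one edge). -/
def singleEdge (u v : V) : V → V → Prop := fun a b => a = u ∧ b = v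

/-- The relation of lonely cut-edges. -/
def lonelyRel (E : V → V → Prop) (r : V) : V → V → Prop :=
  fun u v => IsLonelyCutEdge E r u v

/-- Vertices of the contracted graph `D_c`, obtained by contracting all lonely cut-edges. -/
def ContractedVert (E : V → V → Prop) (r : V) : Type := CVert (lonelyRel E r)

/-- The edge relation of the contracted graph `D_c`. -/
def contractedE (E : V → V → Prop) (r : V) : ContractedVert E r → ContractedVert E r → Prop :=
  contractE E (lonelyRel E r)

/-- The root of the contracted graph `D_c`. -/
def contractedRoot (E : V → V → Prop) (r : V) : ContractedVert E r := cmk (lonelyRel E r) r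

/-- The bag of a vertex of `D_c`: the set of original vertices contracted into it. -/
def bag (E : V → V → Prop) (r : V) (a : ContractedVert E r) : Set V :=
  {x | cmk (lonelyRel E r) x = a}

/-- `t` is a tail of the bag `B`: it is the tail of a contracted (lonely) cut-edge inside `B`,
or `B` is the singleton `{t}`. -/
def IsTailOf (E : V → V → Prop) (r : V) (B : Set V) (t : V) : Prop :=
  t ∈ B ∧ (B = {t} ∨ ∃ h ∈ B, IsLonelyCutEdge E r t h)

/-- `h` is a head of the bag `B`: it is the head of a contracted (lonely) cut-edge inside `B`,
or `B` is the singleton `{h}`. -/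
def IsHeadOf (E : V → V → Prop) (r : V) (B : Set V) (h : V) : Prop :=
  h ∈ B ∧ (B = {h} ∨ ∃ t ∈ B, IsLonelyCutEdge E r t h)

/-- Two bags are linked if there is an edge of `D` in each direction between them. -/
def LinkedBags (E : V → V → Prop) (A B : Set V) : Prop :=
  (∃ x ∈ A, ∃ y ∈ B, E x y) ∧ (∃ x ∈ B, ∃ y ∈ A, E x y)

/-! ### Duplication of a vertex -/

/-- Duplicating the vertex `v`: the new vertex is `none`, receiving/sending edges exactly
as `v` does. -/
def dupE (E : V → V → Prop) (v : V) : Option V → Option V → Prop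
  | some a, some b => E a b
  | some a, none => E a v
  | none, some b => E v b
  | none, none => False

/-! ### Undirected notions: underlying graph, minors -/

/-- The underlying undirected simple graph of a digraph. -/
def underlying (E : V → V → Prop) : SimpleGraph V where
  Adj a b := a ≠ b ∧ (E a b ∨ E b a)
  symm := ⟨fun a b h => ⟨Ne.symm h.1, h.2.symm⟩⟩
  loopless := ⟨fun a h => h.1 rfl⟩

/-- `H` is a minor of `G`: there is a minor model of `H` in `G`. -/
def IsMinorOf {W U : Type} (H : SimpleGraph W) (G : SimpleGraph U) : Prop :=
  ∃ I : W → Set U,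
    (∀ u, (G.induce (I u)).Connected) ∧
    (Pairwise fun u v => Disjoint (I u) (I v)) ∧
    (∀ u v, H.Adj u v → ∃ x ∈ I u, ∃ y ∈ I v, G.Adj x y)

/-- `G` is `H`-minor-free. -/
def MinorFree {W U : Type} (H : SimpleGraph W) (G : SimpleGraph U) : Prop := ¬ IsMinorOf H G

/-! ### Weak bipaths -/

/-- A weak bipath in a digraph: a sequence of at least 3 distinct vertices whose internal
vertices have in-neighbourhood exactly the two adjacent vertices of the sequence, both
of which are also out-neighbours. -/
structure WeakBipath {W : Type} (E : W → W → Prop) where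
  len : ℕ
  u : Fin (len + 3) → W
  inj : Function.Injective u
  cond : ∀ i j k : Fin (len + 3), j.val + 1 = i.val → i.val + 1 = k.val →
    (∀ w, E w (u i) ↔ (w = u j ∨ w = u k)) ∧ E (u i) (u j) ∧ E (u i) (u k)

/-- The set of internal vertices of a weak bipath. -/
def WeakBipath.internal {W : Type} {E : W → W → Prop} (P : WeakBipath E) : Set W :=
  {w | ∃ i : Fin (P.len + 3), 0 < i.val ∧ i.val < P.len + 2 ∧ P.u i = w}

/-- The first extremity of a weak bipath. -/
def WeakBipath.first {W : Type} {E : W → W → Prop} (P : WeakBipath E) : W := P.u 0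

/-- The last extremity of a weak bipath. -/
def WeakBipath.last {W : Type} {E : W → W → Prop} (P : WeakBipath E) : W :=
  P.u (Fin.last (P.len + 2))

private lemma degen_sum {V : Type} [Fintype V] (G : SimpleGraph V) [DecidableRel G.Adj]
    (d : ℕ) [DecidableEq V]
    (hdegen : ∀ s : Set V, s.Nonempty → ∃ v ∈ s, {u ∈ s | G.Adj v u}.ncard ≤ d) :
    ∀ (n : ℕ) (s : Finset V), s.card = n →
      ∑ v ∈ s, (s.filter (G.Adj v)).card ≤ 2 * d * s.card := by
  intro n
  induction n with
  | zero => intro s hs; simp [Finset.card_eq_zero.mp hs]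
  | succ n ih =>
    intro s hs
    have hne : (↑s : Set V).Nonempty := by
      rw [Finset.coe_nonempty]
      exact Finset.card_pos.mp (by omega)
    obtain ⟨v, hv, hvd⟩ := hdegen ↑s hne
    have hv' : v ∈ s := hv
    have hset : {u ∈ (↑s : Set V) | G.Adj v u} = ↑(s.filter (G.Adj v)) := by
      ext u; simp [and_comm]
    rw [hset, Set.ncard_coe_finset] at hvd
    set s' := s.erase v with hs'
    have hins : s = insert v s' := by
      rw [hs', Finset.insert_erase hv']
    have hvns' : v ∉ s' := Finset.notMem_erase v s
    have hcard' : s'.card = n := by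
      rw [hs', Finset.card_erase_of_mem hv']; omega
    have key : ∀ u, (s.filter (G.Adj u)).card
        = (s'.filter (G.Adj u)).card + (if G.Adj u v then 1 else 0) := by
      intro u
      rw [hins, Finset.filter_insert]
      split
      · rw [Finset.card_insert_of_notMem (by simp [hvns'])]
      · simp
    have hsum : ∑ u ∈ s, (s.filter (G.Adj u)).card
        = (s.filter (G.Adj v)).card + ∑ u ∈ s', (s.filter (G.Adj u)).card := by
      rw [hins, Finset.sum_insert hvns']
    have hsplit : ∑ u ∈ s', (s.filter (G.Adj u)).card
        = ∑ u ∈ s', (s'.filter (G.Adj u)).card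
          + ∑ u ∈ s', (if G.Adj u v then 1 else 0) := by
      rw [← Finset.sum_add_distrib]
      exact Finset.sum_congr rfl fun u _ => key u
    have hind : ∑ u ∈ s', (if G.Adj u v then 1 else 0)
        = (s'.filter (fun u => G.Adj u v)).card := by
      rw [Finset.card_filter]
    have hle1 : (s'.filter (fun u => G.Adj u v)).card ≤ d := by
      calc (s'.filter (fun u => G.Adj u v)).card
          = (s'.filter (G.Adj v)).card := by
            congr 1; apply Finset.filter_congr; intro x _; simp [G.adj_comm]
        _ ≤ (s.filter (G.Adj v)).card := by
            apply Finset.card_le_card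
            exact Finset.filter_subset_filter _ (Finset.erase_subset v s)
        _ ≤ d := hvd
    have hih := ih s' hcard'
    rw [hsum, hsplit, hind]
    have : 2 * d * s.card = 2 * d * s'.card + 2 * d := by rw [hcard', hs]; ring
    omega

/-- In a `d`-degenerate bipartite graph `G = (X,Y,E)`, the sum of the
degrees of the vertices of `Y` of degree greater than `2d` is at most `2d·|X|`. -/
theorem bipartite_degenerate_big_degrees {V : Type} [Fintype V] (G : SimpleGraph V)
    (X Y : Set V) (d : ℕ)
    (hcover : X ∪ Y = Set.univ) (hdisj : Disjoint X Y)
    (hbip : ∀ a b, G.Adj a b → (a ∈ X ∧ b ∈ Y) ∨ (a ∈ Y ∧ b ∈ X))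
    (hdegen : ∀ s : Set V, s.Nonempty → ∃ v ∈ s, {u ∈ s | G.Adj v u}.ncard ≤ d) :
    ∑ᶠ y ∈ {y ∈ Y | 2 * d < (G.neighborSet y).ncard}, (G.neighborSet y).ncard
      ≤ 2 * d * X.ncard := by
  classical
  -- Finset versions
  set Xf : Finset V := X.toFinset with hXf
  set Yf : Finset V := Finset.univ.filter
    (fun y => y ∈ Y ∧ 2 * d < (G.neighborSet y).ncard) with hYf
  have hsetY : {y ∈ Y | 2 * d < (G.neighborSet y).ncard} = ↑Yf := by
    ext y; simp [hYf]
  have hncard : ∀ y, (G.neighborSet y).ncard = (G.neighborFinset y).card := by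
    intro y
    rw [G.neighborFinset_def, Set.ncard_eq_toFinset_card']
  have hfs : ∑ᶠ y ∈ {y ∈ Y | 2 * d < (G.neighborSet y).ncard}, (G.neighborSet y).ncard
      = ∑ y ∈ Yf, (G.neighborFinset y).card := by
    rw [hsetY, finsum_mem_coe_finset]
    exact Finset.sum_congr rfl fun y _ => hncard y
  rw [hfs]
  have hXncard : X.ncard = Xf.card := by
    rw [hXf, Set.ncard_eq_toFinset_card']
  rw [hXncard]
  -- neighbors of y ∈ Yf are all in X
  have hNsub : ∀ y ∈ Yf, G.neighborFinset y ⊆ Xf := by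
    intro y hy u hu
    simp only [hYf, Finset.mem_filter] at hy
    rw [SimpleGraph.mem_neighborFinset] at hu
    rcases hbip y u hu with ⟨hyX, _⟩ | ⟨_, huX⟩
    · exact absurd hyX (Set.disjoint_left.mp hdisj.symm hy.2.1)
    · simpa [hXf] using huX
  -- the combined set
  set s : Finset V := Xf ∪ Yf with hsdef
  have hdisjf : Disjoint Xf Yf := by
    rw [Finset.disjoint_left]
    intro a haX haY
    simp only [hYf, Finset.mem_filter] at haY
    exact Set.disjoint_left.mp hdisj (by simpa [hXf] using haX) haY.2.1
  have hmain := degen_sum G d hdegen s.card s rfl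
  -- for y ∈ Yf, induced degree = full degree
  have hdegY : ∀ y ∈ Yf, (s.filter (G.Adj y)).card = (G.neighborFinset y).card := by
    intro y hy
    congr 1
    ext u
    simp only [Finset.mem_filter, SimpleGraph.mem_neighborFinset]
    constructor
    · exact fun h => h.2
    · intro h
      refine ⟨?_, h⟩
      have : u ∈ G.neighborFinset y := by rwa [SimpleGraph.mem_neighborFinset]
      exact Finset.mem_union_left _ (hNsub y hy this)
  -- split the sum
  have hsum_split : ∑ v ∈ s, (s.filter (G.Adj v)).card
      = ∑ x ∈ Xf, (s.filter (G.Adj x)).card + ∑ y ∈ Yf, (s.filter (G.Adj y)).card := by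
    rw [hsdef, Finset.sum_union hdisjf]
  -- double counting: ∑_{x ∈ Xf} |N(x) ∩ Yf| = ∑_{y ∈ Yf} |N(y) ∩ Xf|
  have hdouble : ∑ x ∈ Xf, (Yf.filter (G.Adj x)).card
      = ∑ y ∈ Yf, (Xf.filter (G.Adj y)).card := by
    simp only [Finset.card_filter]
    rw [Finset.sum_comm]
    refine Finset.sum_congr rfl fun y _ => Finset.sum_congr rfl fun x _ => ?_
    simp [G.adj_comm]
  -- ∑_{x} induced deg ≥ ∑_{y} full deg
  have hXside : ∑ y ∈ Yf, (G.neighborFinset y).card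
      ≤ ∑ x ∈ Xf, (s.filter (G.Adj x)).card := by
    calc ∑ y ∈ Yf, (G.neighborFinset y).card
        = ∑ y ∈ Yf, (Xf.filter (G.Adj y)).card := by
          refine Finset.sum_congr rfl fun y hy => ?_
          congr 1
          ext u
          simp only [Finset.mem_filter, SimpleGraph.mem_neighborFinset]
          constructor
          · intro h
            refine ⟨hNsub y hy (by rwa [SimpleGraph.mem_neighborFinset]), h⟩
          · exact fun h => h.2
      _ = ∑ x ∈ Xf, (Yf.filter (G.Adj x)).card := hdouble.symm
      _ ≤ ∑ x ∈ Xf, (s.filter (G.Adj x)).card := by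
          refine Finset.sum_le_sum fun x _ => Finset.card_le_card ?_
          exact Finset.filter_subset_filter _ (Finset.subset_union_right)
  have hYside : ∑ y ∈ Yf, (s.filter (G.Adj y)).card
      = ∑ y ∈ Yf, (G.neighborFinset y).card :=
    Finset.sum_congr rfl hdegY
  -- each term in Yf is > 2d
  have hbig : (2 * d + 1) * Yf.card ≤ ∑ y ∈ Yf, (G.neighborFinset y).card := by
    rw [mul_comm]
    calc Yf.card * (2 * d + 1) = ∑ _y ∈ Yf, (2 * d + 1) := by
          rw [Finset.sum_const, smul_eq_mul]
      _ ≤ ∑ y ∈ Yf, (G.neighborFinset y).card := by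
          refine Finset.sum_le_sum fun y hy => ?_
          simp only [hYf, Finset.mem_filter] at hy
          rw [← hncard y]; omega
  have hscard : s.card = Xf.card + Yf.card := Finset.card_union_of_disjoint hdisjf
  set S := ∑ y ∈ Yf, (G.neighborFinset y).card with hS
  -- combine: 2S ≤ ∑_{v∈s} induced deg ≤ 2d(|Xf|+|Yf|), and 2d|Yf| ≤ S
  have h1 : S + S ≤ 2 * d * (Xf.card + Yf.card) := by
    calc S + S ≤ ∑ x ∈ Xf, (s.filter (G.Adj x)).card
          + ∑ y ∈ Yf, (s.filter (G.Adj y)).card := by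
          rw [hYside]; exact Nat.add_le_add hXside le_rfl
      _ = ∑ v ∈ s, (s.filter (G.Adj v)).card := hsum_split.symm
      _ ≤ 2 * d * s.card := hmain
      _ = 2 * d * (Xf.card + Yf.card) := by rw [hscard]
  have h2 : 2 * d * Yf.card ≤ S := le_trans (by nlinarith) hbig
  nlinarith


end OutBranching
end

section
/- Let D be a connected rooted digraph to which none of the reduction rules R1–R6 applies. Then every bag of the contracted graph D_c has at most two vertices and contains at most one contracted cut-edge; in particular, every bag has exactly one head and exactly one tail. -/
namespace OutBranching

variable {V : Type}

/-! ### Auxiliary lemmas for Statement 13 -/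

section Aux13

variable {E : V → V → Prop} {r : V}

/-- Splitting reachability at a single deleted edge. -/
lemma reaches_del_split {u v b : V} (h : Reaches E r b) :
    Reaches (delEdge E u v) r b ∨ Reaches (delEdge E u v) v b := by
  induction h with
  | refl => exact Or.inl Relation.ReflTransGen.refl
  | @tail a c _ hEac ih =>
    by_cases hec : a = u ∧ c = v
    · exact Or.inr (hec.2 ▸ Relation.ReflTransGen.refl)
    · rcases ih with h | h
      · exact Or.inl (h.tail ⟨hEac, hec⟩)
      · exact Or.inr (h.tail ⟨hEac, hec⟩)

/-- Any vertex `v ≠ r` reachable from `r` has an "entry" in-neighbour reachable avoiding `v`. -/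
lemma exists_entry {v : V} (hvr : v ≠ r) (h : Reaches E r v) :
    ∃ x, E x v ∧ ReachAvoid E {v} r x := by
  have hrv : r ∉ ({v} : Set V) := fun hm => hvr (Set.mem_singleton_iff.mp hm).symm
  have key : ∀ b, Reaches E r b →
      ReachAvoid E {v} r b ∨ ∃ x, E x v ∧ ReachAvoid E {v} r x := by
    intro b hb
    induction hb with
    | refl => exact Or.inl ⟨hrv, hrv, Relation.ReflTransGen.refl⟩
    | @tail a c _ hac ih =>
      rcases ih with h | h
      · by_cases hcv : c = v
        · exact Or.inr ⟨a, hcv ▸ hac, h⟩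
        · have hcm : c ∉ ({v} : Set V) := fun hm => hcv (Set.mem_singleton_iff.mp hm)
          exact Or.inl ⟨h.1, hcm, h.2.2.tail ⟨hac, h.2.1, hcm⟩⟩
      · exact Or.inr h
  rcases key v h with h | h
  · exact (h.2.1 (Set.mem_singleton_iff.mpr rfl)).elim
  · exact h

/-- A walk avoiding the vertex `v` never uses an edge with head `v`. -/
lemma reachAvoid_to_del {u v x : V} (h : ReachAvoid E {v} r x) :
    Reaches (delEdge E u v) r x := by
  obtain ⟨-, -, hw⟩ := h
  exact Relation.ReflTransGen.mono (p := delEdge E u v)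
    (fun a b hab => ⟨hab.1, fun hc => hab.2.2 (Set.mem_singleton_iff.mpr hc.2)⟩) _ _ hw

/-- A walk avoiding the vertex `v` never uses an edge with tail `v`. -/
lemma reachAvoid_to_del_tail {v w x : V} (h : ReachAvoid E {v} r x) :
    Reaches (delEdge E v w) r x := by
  obtain ⟨-, -, hw⟩ := h
  exact Relation.ReflTransGen.mono (p := delEdge E v w)
    (fun a b hab => ⟨hab.1, fun hc => hab.2.1 (Set.mem_singleton_iff.mpr hc.1)⟩) _ _ hw

/-- For a cut-edge `(u,v)`, the only in-neighbour of `v` reachable avoiding `v` is `u`. -/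
lemma entry_eq_tail (hconn : Connected E r) {u v x : V}
    (hcut : IsCutEdge E r u v) (hx : E x v) (hra : ReachAvoid E {v} r x) : x = u := by
  by_contra hne
  obtain ⟨_, w, hw⟩ := hcut
  have hvw : Reaches (delEdge E u v) v w := (reaches_del_split (hconn w)).resolve_left hw
  have hrx : Reaches (delEdge E u v) r x := reachAvoid_to_del hra
  exact hw ((hrx.tail ⟨hx, fun hh => hne hh.1⟩).trans hvw)

/-- Two cut-edges with the same head have the same tail. -/
lemma cutEdge_head_unique (hroot : ∀ u, ¬ E u r) (hconn : Connected E r) {u u' v : V}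
    (h1 : IsCutEdge E r u v) (h2 : IsCutEdge E r u' v) : u = u' := by
  have hvr : v ≠ r := fun h => hroot u (h ▸ h1.1)
  obtain ⟨x, hx, hra⟩ := exists_entry hvr (hconn v)
  rw [← entry_eq_tail hconn h1 hx hra, ← entry_eq_tail hconn h2 hx hra]

/-- If rule 4 does not apply then the digraph has no loops. -/
lemma no_loop (hroot : ∀ u, ¬ E u r) (hR4 : Rule4NA E r) (v : V) : ¬ E v v := by
  intro hvv
  have hvr : v ≠ r := fun h => hroot v (h ▸ hvv)
  have hra : ReachAvoid E {z | E z v ∧ z ≠ v} r v := by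
    by_contra h; exact hR4 ⟨v, v, hvv, h⟩
  have key : ∀ b, Relation.ReflTransGen
      (fun x y => E x y ∧ x ∉ {z | E z v ∧ z ≠ v} ∧ y ∉ {z | E z v ∧ z ≠ v}) r b →
      b ≠ v := by
    intro b hb
    induction hb with
    | refl => exact hvr.symm
    | @tail a c _ hac ih =>
      intro hcv
      subst hcv
      exact ih (by_contra fun hne => hac.2.1 ⟨hac.1, hne⟩)
  exact key v hra.2.2 rfl

/-- No two cut-edges are consecutive (tail of one is the head of the other). -/
lemma no_consecutive (hroot : ∀ u, ¬ E u r) (hconn : Connected E r)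
    (hR2 : Rule2NA E r) (hR4 : Rule4NA E r) {u v w : V}
    (h1 : IsCutEdge E r u v) (h2 : IsCutEdge E r v w) : False := by
  have hvr : v ≠ r := fun h => hroot u (h ▸ h1.1)
  obtain ⟨x, hxv, hrx⟩ := exists_entry hvr (hconn v)
  have hxne : x ≠ v := fun h => hrx.2.1 (Set.mem_singleton_iff.mpr h)
  have hrvdel : Reaches (delEdge E v w) r v :=
    (reachAvoid_to_del_tail hrx).tail ⟨hxv, fun hh => hxne hh.1⟩
  obtain ⟨hEvw, w₁, hw₁⟩ := h2
  have hw₁v : w₁ ≠ v := fun h => hw₁ (h ▸ hrvdel)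
  have hcv : IsCutVertex E r v :=
    ⟨hvr, w₁, hw₁v, fun hra => hw₁ (reachAvoid_to_del_tail hra)⟩
  obtain ⟨u', hu'v, hu'ne⟩ : ∃ u', E u' v ∧ u' ≠ u := by
    by_contra hno
    push_neg at hno
    exact (hR2 v hcv).1 ⟨u, h1.1, hno⟩
  have hra : ReachAvoid E {z | E z v ∧ z ≠ u'} r u' := by
    by_contra h; exact hR4 ⟨v, u', hu'v, h⟩
  have hkey : ∀ b, Relation.ReflTransGen
      (fun x y => E x y ∧ x ∉ {z | E z v ∧ z ≠ u'} ∧ y ∉ {z | E z v ∧ z ≠ u'}) r b →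
      ReachAvoid E {v} r b ∨ ReachAvoid E {v} r u' := by
    intro b hb
    have hrv : r ∉ ({v} : Set V) := fun hm => hvr (Set.mem_singleton_iff.mp hm).symm
    induction hb with
    | refl => exact Or.inl ⟨hrv, hrv, Relation.ReflTransGen.refl⟩
    | @tail a c _ hac ih =>
      rcases ih with hl | hr
      · by_cases hcv' : c = v
        · have hau : a = u' := by_contra fun hne => hac.2.1 ⟨hcv' ▸ hac.1, hne⟩
          exact Or.inr (hau ▸ hl)
        · have hcm : c ∉ ({v} : Set V) := fun hm => hcv' (Set.mem_singleton_iff.mp hm)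
          exact Or.inl ⟨hl.1, hcm, hl.2.2.tail ⟨hac.1, hl.2.1, hcm⟩⟩
      · exact Or.inr hr
  have hfin : ReachAvoid E {v} r u' := by
    rcases hkey u' hra.2.2 with h | h <;> exact h
  exact hu'ne (entry_eq_tail hconn h1 hu'v hfin)

/-- If a relation is functional, co-functional and has no two consecutive edges, then its
generated equivalence relation is just "equal or related one way or the other". -/
lemma eqvGen_cases {L : V → V → Prop}
    (Lfun : ∀ x y y', L x y → L x y' → y = y')
    (Lcof : ∀ x x' y, L x y → L x' y → x = x')
    (Lcons : ∀ x y z, L x y → L y z → False) :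
    ∀ {x y}, Relation.EqvGen L x y → x = y ∨ L x y ∨ L y x := by
  intro x y h
  induction h with
  | rel a b hab => exact Or.inr (Or.inl hab)
  | refl a => exact Or.inl rfl
  | symm a b _ ih =>
    rcases ih with h | h | h
    · exact Or.inl h.symm
    · exact Or.inr (Or.inr h)
    · exact Or.inr (Or.inl h)
  | trans a b c _ _ ih1 ih2 =>
    rcases ih1 with rfl | h | h
    · exact ih2
    · rcases ih2 with rfl | h' | h'
      · exact Or.inr (Or.inl h)
      · exact (Lcons _ _ _ h h').elim
      · exact Or.inl (Lcof _ _ _ h h')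
    · rcases ih2 with rfl | h' | h'
      · exact Or.inr (Or.inr h)
      · exact Or.inl (Lfun _ _ _ h h')
      · exact (Lcons _ _ _ h' h).elim

/-- Conclusion of Statement 13 for a bag which is a single (contracted) lonely cut-edge. -/
lemma bag_pair_conclusion (E : V → V → Prop) (r : V) (a : ContractedVert E r)
    (Lne : ∀ x y, IsLonelyCutEdge E r x y → x ≠ y)
    (Lfun : ∀ x y y', IsLonelyCutEdge E r x y → IsLonelyCutEdge E r x y' → y = y')
    (Lcons : ∀ x y z, IsLonelyCutEdge E r x y → IsLonelyCutEdge E r y z → False)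
    (t h : V) (hL : IsLonelyCutEdge E r t h)
    (hmem : ∀ x, x ∈ bag E r a ↔ x = t ∨ x = h) :
    (bag E r a).ncard ≤ 2 ∧
      (∀ x y x' y', x ∈ bag E r a → y ∈ bag E r a → x' ∈ bag E r a → y' ∈ bag E r a →
          IsLonelyCutEdge E r x y → IsLonelyCutEdge E r x' y' → x = x' ∧ y = y') ∧
      (∃! h, IsHeadOf E r (bag E r a) h) ∧ (∃! t, IsTailOf E r (bag E r a) t) := by
  have hth : t ≠ h := Lne _ _ hL
  have hbag : bag E r a = {t, h} := by
    ext x; rw [hmem]; simp [Set.mem_insert_iff]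
  have htm : t ∈ bag E r a := (hmem t).mpr (Or.inl rfl)
  have hhm : h ∈ bag E r a := (hmem h).mpr (Or.inr rfl)
  have hnsingle : ∀ z : V, bag E r a ≠ {z} := by
    intro z hz
    rw [hz] at htm hhm
    exact hth ((Set.mem_singleton_iff.mp htm).trans (Set.mem_singleton_iff.mp hhm).symm)
  have hedge : ∀ x y, x ∈ bag E r a → IsLonelyCutEdge E r x y → x = t ∧ y = h := by
    intro x y hx hxy
    rcases (hmem x).mp hx with rfl | rfl
    · exact ⟨rfl, (Lfun _ _ _ hL hxy).symm ▸ rfl⟩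
    · exact (Lcons _ _ _ hL hxy).elim
  refine ⟨?_, ?_, ?_, ?_⟩
  · rw [hbag]; exact (Set.ncard_pair hth).le
  · intro x y x' y' hx _ hx' _ hxy hxy'
    obtain ⟨rfl, rfl⟩ := hedge x y hx hxy
    obtain ⟨rfl, rfl⟩ := hedge x' y' hx' hxy'
    exact ⟨rfl, rfl⟩
  · refine ⟨h, ⟨hhm, Or.inr ⟨t, htm, hL⟩⟩, ?_⟩
    rintro h' ⟨hh'mem, hcase | ⟨t', ht'mem, hL'⟩⟩
    · exact absurd hcase (hnsingle h')
    · exact ((hedge t' h' ht'mem hL').2).symm ▸ rfl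
  · refine ⟨t, ⟨htm, Or.inr ⟨h, hhm, hL⟩⟩, ?_⟩
    rintro t' ⟨ht'mem, hcase | ⟨h', hh'mem, hL'⟩⟩
    · exact absurd hcase (hnsingle t')
    · exact (hedge t' h' ht'mem hL').1

/-- Conclusion of Statement 13 for a singleton bag. -/
lemma bag_single_conclusion (E : V → V → Prop) (r : V) (a : ContractedVert E r)
    (x₀ : V) (hmem : ∀ x, x ∈ bag E r a ↔ x = x₀) :
    (bag E r a).ncard ≤ 2 ∧
      (∀ x y x' y', x ∈ bag E r a → y ∈ bag E r a → x' ∈ bag E r a → y' ∈ bag E r a →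
          IsLonelyCutEdge E r x y → IsLonelyCutEdge E r x' y' → x = x' ∧ y = y') ∧
      (∃! h, IsHeadOf E r (bag E r a) h) ∧ (∃! t, IsTailOf E r (bag E r a) t) := by
  have hbag : bag E r a = {x₀} := by
    ext x; rw [hmem]; simp
  have hxm : x₀ ∈ bag E r a := (hmem x₀).mpr rfl
  refine ⟨?_, ?_, ?_, ?_⟩
  · rw [hbag, Set.ncard_singleton]; omega
  · intro x y x' y' hx hy hx' hy' _ _
    rw [hmem] at hx hy hx' hy'
    exact ⟨hx.trans hx'.symm, hy.trans hy'.symm⟩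
  · exact ⟨x₀, ⟨hxm, Or.inl hbag⟩, fun h' hh' => (hmem h').mp hh'.1⟩
  · exact ⟨x₀, ⟨hxm, Or.inl hbag⟩, fun t' ht' => (hmem t').mp ht'.1⟩

end Aux13

/-- If none of the reduction rules R1–R6 applies to the connected rooted
digraph `D`, then every bag of the contracted graph `D_c` has at most 2 vertices and
contains at most one contracted (lonely) cut-edge; in particular every bag has exactly
one head and exactly one tail. -/
theorem bag_size_at_most_two {V : Type} [Fintype V] (E : V → V → Prop) (r : V)
    (hroot : ∀ u, ¬ E u r) (hconn : Connected E r) (hred : Reduced6 E r) :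
    ∀ a : ContractedVert E r,
      (bag E r a).ncard ≤ 2 ∧
      (∀ x y x' y', x ∈ bag E r a → y ∈ bag E r a → x' ∈ bag E r a → y' ∈ bag E r a →
          IsLonelyCutEdge E r x y → IsLonelyCutEdge E r x' y' → x = x' ∧ y = y') ∧
      (∃! h, IsHeadOf E r (bag E r a) h) ∧ (∃! t, IsTailOf E r (bag E r a) t) := by
  obtain ⟨⟨hR1, hR2, hR3, hR4⟩, hR5, hR6⟩ := hred
  have Lne : ∀ x y, IsLonelyCutEdge E r x y → x ≠ y :=
    fun _ _ h heq => no_loop hroot hR4 _ (heq ▸ h.1.1)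
  have Lfun : ∀ x y y', IsLonelyCutEdge E r x y → IsLonelyCutEdge E r x y' → y = y' :=
    fun _ _ _ h h' => (h.2 _ h'.1).symm
  have Lcof : ∀ x x' y, IsLonelyCutEdge E r x y → IsLonelyCutEdge E r x' y → x = x' :=
    fun _ _ _ h h' => cutEdge_head_unique hroot hconn h.1 h'.1
  have Lcons : ∀ x y z, IsLonelyCutEdge E r x y → IsLonelyCutEdge E r y z → False :=
    fun _ _ _ h h' => no_consecutive hroot hconn hR2 hR4 h.1 h'.1
  intro a
  obtain ⟨x₀, hx₀⟩ := Quotient.exists_rep a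
  have hmem : ∀ x, x ∈ bag E r a ↔
      (x = x₀ ∨ IsLonelyCutEdge E r x x₀ ∨ IsLonelyCutEdge E r x₀ x) := by
    intro x
    constructor
    · intro hx
      have hq : cmk (lonelyRel E r) x = Quotient.mk (contractSetoid (lonelyRel E r)) x₀ :=
        (Set.mem_setOf_eq ▸ hx).trans hx₀.symm
      have hg : Relation.EqvGen (lonelyRel E r) x x₀ := Quotient.exact hq
      exact eqvGen_cases (L := lonelyRel E r) Lfun Lcof Lcons hg
    · intro hx
      have hg : Relation.EqvGen (lonelyRel E r) x x₀ := by
        rcases hx with rfl | h | h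
        · exact Relation.EqvGen.refl _
        · exact Relation.EqvGen.rel _ _ h
        · exact Relation.EqvGen.symm _ _ (Relation.EqvGen.rel _ _ h)
      show cmk (lonelyRel E r) x = a
      exact (Quotient.sound hg).trans hx₀
  by_cases hc : ∃ y, IsLonelyCutEdge E r x₀ y
  · obtain ⟨y₀, hy₀⟩ := hc
    refine bag_pair_conclusion E r a Lne Lfun Lcons x₀ y₀ hy₀ (fun x => ?_)
    rw [hmem x]
    constructor
    · rintro (rfl | h | h)
      · exact Or.inl rfl
      · exact (Lcons _ _ _ h hy₀).elim
      · exact Or.inr (Lfun _ _ _ hy₀ h).symm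
    · rintro (rfl | rfl)
      · exact Or.inl rfl
      · exact Or.inr (Or.inr hy₀)
  · by_cases hd : ∃ y, IsLonelyCutEdge E r y x₀
    · obtain ⟨y₀, hy₀⟩ := hd
      refine bag_pair_conclusion E r a Lne Lfun Lcons y₀ x₀ hy₀ (fun x => ?_)
      rw [hmem x]
      constructor
      · rintro (rfl | h | h)
        · exact Or.inr rfl
        · exact Or.inl (Lcof _ _ _ h hy₀)
        · exact (hc ⟨x, h⟩).elim
      · rintro (rfl | rfl)
        · exact Or.inr (Or.inl hy₀)
        · exact Or.inl rfl
    · refine bag_single_conclusion E r a x₀ (fun x => ?_)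
      rw [hmem x]
      constructor
      · rintro (rfl | h | h)
        · exact rfl
        · exact (hd ⟨x, h⟩).elim
        · exact (hc ⟨x, h⟩).elim
      · rintro rfl
        exact Or.inl rfl

end OutBranching
end

section
/- Let D be a connected rooted digraph to which reduction rules R1–R4 do not apply. Then for any two distinct bags A and B of the contracted graph D_c, every edge of D from a vertex of A to a vertex of B has its head equal to the tail t_B of B (in particular, no edge from A ends at the head of a contracted cut-edge inside B). -/
namespace OutBranching

variable {V : Type}

/-- Detour lemma: any walk to `w` either avoids the edge `(t,y)` entirely, or
`w` is reachable from `y` avoiding `(t,y)`. -/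
lemma detour (E : V → V → Prop) (t y w : V) :
    ∀ a, Relation.ReflTransGen E a w →
      Relation.ReflTransGen (delEdge E t y) a w ∨
        Relation.ReflTransGen (delEdge E t y) y w := by
  intro a h
  induction h using Relation.ReflTransGen.head_induction_on with
  | refl => exact Or.inl .refl
  | @head p c hac _ ih =>
    rcases ih with ih | ih
    · by_cases he : p = t ∧ c = y
      · exact Or.inr (he.2 ▸ ih)
      · exact Or.inl (.head ⟨hac, he⟩ ih)
    · exact Or.inr ih

/-- If `(t,y)` is a cut-edge and `x ≠ t` is an in-neighbor of `y`, Rule 4 applies. -/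
lemma no_cutedge_head (E : V → V → Prop) (r : V) (hconn : Connected E r)
    (h4 : Rule4NA E r) {x y t : V} (hxy : E x y) (hxt : x ≠ t)
    (hcut : IsCutEdge E r t y) : False := by
  obtain ⟨hty, w, hw⟩ := hcut
  have hnx : ¬ Relation.ReflTransGen (delEdge E t y) r x := by
    intro hrx
    apply hw
    have hry : Relation.ReflTransGen (delEdge E t y) r y :=
      hrx.tail ⟨hxy, fun he => hxt he.1⟩
    rcases detour E t y w r (hconn w) with h | h
    · exact (hw h).elim
    · exact hry.trans h
  apply h4
  refine ⟨y, x, hxy, ?_⟩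
  rintro ⟨hrS, hxS, hpath⟩
  refine hnx (Relation.ReflTransGen.mono ?_ _ _ hpath)
  rintro p q ⟨hpq, hpS, -⟩
  refine ⟨hpq, ?_⟩
  rintro ⟨rfl, rfl⟩
  exact hpS ⟨hty, fun h => hxt h.symm⟩

/-- A vertex equivalent to some other vertex under `EqvGen C` is an endpoint of a
`C`-edge. -/
lemma eqvgen_endpoint {C : V → V → Prop} {a b : V} (h : Relation.EqvGen C a b) :
    a = b ∨ ((∃ w, C a w ∨ C w a) ∧ (∃ w, C b w ∨ C w b)) := by
  induction h with
  | rel p q hpq => exact Or.inr ⟨⟨q, Or.inl hpq⟩, ⟨p, Or.inr hpq⟩⟩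
  | refl => exact Or.inl rfl
  | symm p q _ ih =>
    rcases ih with rfl | ⟨h1, h2⟩
    · exact Or.inl rfl
    · exact Or.inr ⟨h2, h1⟩
  | trans p q s _ _ ih1 ih2 =>
    rcases ih1 with rfl | ⟨h1, h2⟩
    · exact ih2
    rcases ih2 with rfl | ⟨-, h3⟩
    · exact Or.inr ⟨h1, h2⟩
    · exact Or.inr ⟨h1, h3⟩

/-- If reduction rules R1–R4 do not apply to the connected rooted digraph
`D`, then for any two distinct bags `A`, `B` of `D_c`, every edge of `D` from `A` to `B`
has its head equal to the tail of `B`; in particular no edge from `A` ends at the head of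
a contracted cut-edge inside `B`. -/
theorem edge_between_bags_hits_tail {V : Type} [Fintype V] (E : V → V → Prop) (r : V)
    (hroot : ∀ u, ¬ E u r) (hred : Reduced4 E r) :
    ∀ a b : ContractedVert E r, a ≠ b →
      ∀ x y, x ∈ bag E r a → y ∈ bag E r b → E x y →
        IsTailOf E r (bag E r b) y ∧ ¬ ∃ t ∈ bag E r b, IsLonelyCutEdge E r t y := by
  intro a b hab x y hxa hyb hxy
  have hconn : Connected E r := hred.1
  have h4 : Rule4NA E r := hred.2.2.2
  have key : ¬ ∃ t ∈ bag E r b, IsLonelyCutEdge E r t y := by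
    rintro ⟨t, -, hl⟩
    have hteq : cmk (lonelyRel E r) t = b := by
      have h1 : cmk (lonelyRel E r) t = cmk (lonelyRel E r) y :=
        Quotient.sound (Relation.EqvGen.rel t y hl)
      rw [h1]; exact hyb
    have hxt : x ≠ t := by
      rintro rfl
      exact hab (hxa.symm.trans hteq)
    exact no_cutedge_head E r hconn h4 hxy hxt hl.1
  refine ⟨⟨hyb, ?_⟩, key⟩
  by_cases hsing : bag E r b = {y}
  · exact Or.inl hsing
  · right
    have hz : ∃ z, z ∈ bag E r b ∧ z ≠ y := by
      by_contra hno
      push_neg at hno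
      apply hsing
      ext z
      constructor
      · intro hzb; exact hno z hzb
      · intro hzy
        rw [Set.mem_singleton_iff] at hzy
        subst hzy; exact hyb
    obtain ⟨z, hzb, hzy⟩ := hz
    have heq : Relation.EqvGen (lonelyRel E r) y z :=
      Quotient.exact ((hyb : cmk (lonelyRel E r) y = b).trans hzb.symm)
    rcases eqvgen_endpoint heq with rfl | ⟨⟨w, hw⟩, -⟩
    · exact (hzy rfl).elim
    rcases hw with hw | hw
    · refine ⟨w, ?_, hw⟩
      have h1 : cmk (lonelyRel E r) y = cmk (lonelyRel E r) w :=
        Quotient.sound (Relation.EqvGen.rel _ _ hw)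
      show cmk (lonelyRel E r) w = b
      rw [← h1]; exact hyb
    · refine (key ⟨w, ?_, hw⟩).elim
      have h1 : cmk (lonelyRel E r) w = cmk (lonelyRel E r) y :=
        Quotient.sound (Relation.EqvGen.rel _ _ hw)
      exact h1.trans hyb

end OutBranching
end

section
/- Let D be a connected rooted digraph to which reduction rules R1–R4 do not apply. If two bags A and B of the contracted graph D_c are linked, then D contains exactly one edge from a vertex of A to a vertex of B, and exactly one edge from a vertex of B to a vertex of A. -/
namespace OutBranching

variable {V : Type}

/-! ### Auxiliary lemmas for Statement 15 -/

section Aux15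

variable {V : Type} {E : V → V → Prop} {r : V}

/-- If the head of a deleted edge is still reachable, everything is reachable. -/
private lemma aux15_all_reach_del (hconn : Connected E r) {u v : V}
    (h : Relation.ReflTransGen (delEdge E u v) r v) (z : V) :
    Relation.ReflTransGen (delEdge E u v) r z := by
  have hz : Relation.ReflTransGen E r z := hconn z
  induction hz with
  | refl => exact Relation.ReflTransGen.refl
  | @tail b c hrb hbc ih =>
    by_cases hc : b = u ∧ c = v
    · exact hc.2 ▸ h
    · exact ih.tail ⟨hbc, hc⟩

/-- The head of a cut-edge is unreachable once the edge is deleted. -/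
private lemma aux15_head_unreach (hconn : Connected E r) {u v : V}
    (h : IsCutEdge E r u v) :
    ¬ Relation.ReflTransGen (delEdge E u v) r v := by
  intro hv
  obtain ⟨_, w, hw⟩ := h
  exact hw (aux15_all_reach_del hconn hv w)

private lemma aux15_reach_w_of_blocked {F : V → V → Prop}
    (hFE : ∀ ⦃a b⦄, F a b → E a b) {w v : V}
    (hv : ¬ Relation.ReflTransGen (delEdge E w v) r v)
    {t : V} (h : Relation.ReflTransGen F r t) :
    Relation.ReflTransGen (delEdge E w v) r t ∨ Relation.ReflTransGen F r w := by
  induction h with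
  | refl => exact Or.inl Relation.ReflTransGen.refl
  | @tail b c hrb hbc ih =>
    rcases ih with hd | hw
    · by_cases hbw : b = w ∧ c = v
      · exact Or.inr (hbw.1 ▸ hrb)
      · exact Or.inl (hd.tail ⟨hFE hbc, hbw⟩)
    · exact Or.inr hw

/-- A blocked endpoint forces passing through the tail `w`. -/
private lemma aux15_reach_F_w {F : V → V → Prop}
    (hFE : ∀ ⦃a b⦄, F a b → E a b) {w v : V}
    (hv : ¬ Relation.ReflTransGen (delEdge E w v) r v)
    (h : Relation.ReflTransGen F r v) : Relation.ReflTransGen F r w := by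
  rcases aux15_reach_w_of_blocked hFE hv h with hd | hw
  · exact absurd hd hv
  · exact hw

/-- **Key lemma**: the head of a cut-edge has its tail as unique in-neighbour. -/
private lemma aux15_cut_head_in_unique (hconn : Connected E r) (h4 : Rule4NA E r)
    {u v p : V} (hcut : IsCutEdge E r u v) (hp : E p v) : p = u := by
  by_contra hpu
  have hdel := aux15_head_unreach hconn hcut
  have hra : ReachAvoid E {w | E w v ∧ w ≠ p} r p := by
    by_contra hna
    exact h4 ⟨v, p, hp, hna⟩
  obtain ⟨hrS, hpS, hwalk⟩ := hra
  have huS : u ∈ {w | E w v ∧ w ≠ p} := ⟨hcut.1, fun h => hpu h.symm⟩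
  have hgen : ∀ t, Relation.ReflTransGen
      (fun x y => E x y ∧ x ∉ {w | E w v ∧ w ≠ p} ∧ y ∉ {w | E w v ∧ w ≠ p}) r t →
      Relation.ReflTransGen (delEdge E u v) r t := by
    intro t ht
    induction ht with
    | refl => exact Relation.ReflTransGen.refl
    | @tail b c hrb hbc ih =>
      exact ih.tail ⟨hbc.1, fun hh => hbc.2.1 (by rw [hh.1]; exact huS)⟩
  have hreach : Relation.ReflTransGen (delEdge E u v) r p := hgen p hwalk
  exact hdel (hreach.tail ⟨hp, fun hh => hpu hh.1⟩)

private lemma aux15_comparable_in {L : V → V → Prop}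
    (hin : ∀ ⦃a b c⦄, L a c → L b c → a = b) {z y : V}
    (hz : Relation.ReflTransGen L z y) :
    ∀ x, Relation.ReflTransGen L x y →
      Relation.ReflTransGen L x z ∨ Relation.ReflTransGen L z x := by
  induction hz with
  | refl => exact fun x hx => Or.inl hx
  | @tail b c hzb hbc ih =>
    intro x hx
    rcases hx.cases_tail with rfl | ⟨w, hxw, hwc⟩
    · exact Or.inr (hzb.tail hbc)
    · have hwb : w = b := hin hwc hbc
      exact ih x (hwb ▸ hxw)

private lemma aux15_comparable_out {L : V → V → Prop}
    (hout : ∀ ⦃a b c⦄, L a b → L a c → b = c) {x y : V}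
    (hx : Relation.ReflTransGen L x y) :
    ∀ z, Relation.ReflTransGen L x z →
      Relation.ReflTransGen L y z ∨ Relation.ReflTransGen L z y := by
  induction hx using Relation.ReflTransGen.head_induction_on with
  | refl => exact fun z hz => Or.inl hz
  | @head a c hac hcy ih =>
    intro z hz
    rcases hz.cases_head with rfl | ⟨w, haw, hwz⟩
    · exact Or.inr (Relation.ReflTransGen.head hac hcy)
    · have hwc : w = c := hout haw hac
      exact ih z (hwc ▸ hwz)

private lemma aux15_eqvGen_comparable {L : V → V → Prop}
    (hin : ∀ ⦃a b c⦄, L a c → L b c → a = b)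
    (hout : ∀ ⦃a b c⦄, L a b → L a c → b = c) {a b : V}
    (h : Relation.EqvGen L a b) :
    Relation.ReflTransGen L a b ∨ Relation.ReflTransGen L b a := by
  induction h with
  | rel x y hxy => exact Or.inl (Relation.ReflTransGen.single hxy)
  | refl x => exact Or.inl Relation.ReflTransGen.refl
  | symm x y _ ih => exact ih.symm
  | trans x y z _ _ ih1 ih2 =>
    rcases ih1 with h1 | h1 <;> rcases ih2 with h2 | h2
    · exact Or.inl (h1.trans h2)
    · exact aux15_comparable_in hin h2 x h1
    · exact aux15_comparable_out hout h1 z h2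
    · exact Or.inr (h2.trans h1)

/-- Walks avoiding `S` can be pulled back along a chain of lonely cut-edges. -/
private lemma aux15_reach_chain (hconn : Connected E r) {S : Set V} {x x' : V}
    (hch : Relation.ReflTransGen (lonelyRel E r) x x') :
    Relation.ReflTransGen (fun a b => E a b ∧ a ∉ S ∧ b ∉ S) r x' →
      x = x' ∨ Relation.ReflTransGen (fun a b => E a b ∧ a ∉ S ∧ b ∉ S) r x := by
  induction hch with
  | refl => exact fun _ => Or.inl rfl
  | @tail b c hxb hbc ih =>
    intro hw
    have hblk := aux15_head_unreach hconn hbc.1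
    have hb : Relation.ReflTransGen (fun a b => E a b ∧ a ∉ S ∧ b ∉ S) r b :=
      aux15_reach_F_w (fun a b h => h.1) hblk hw
    rcases ih hb with rfl | h
    · exact Or.inr hb
    · exact Or.inr h

private lemma aux15_end_not_mem {S : Set V} (hr : r ∉ S) {t : V}
    (h : Relation.ReflTransGen (fun a b => E a b ∧ a ∉ S ∧ b ∉ S) r t) : t ∉ S := by
  rcases h.cases_tail with rfl | ⟨w, _, hwt⟩
  · exact hr
  · exact hwt.2.2

/-- Uniqueness of an arc between two distinct bags. -/
private lemma aux15_unique_arc (hconn : Connected E r) (h4 : Rule4NA E r)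
    {a b : ContractedVert E r} (hab : a ≠ b)
    {x y x' y' : V} (hx : x ∈ bag E r a) (hy : y ∈ bag E r b) (hxy : E x y)
    (hx' : x' ∈ bag E r a) (hy' : y' ∈ bag E r b) (hxy' : E x' y') :
    x = x' ∧ y = y' := by
  have hin : ∀ ⦃p q c⦄, lonelyRel E r p c → lonelyRel E r q c → p = q := by
    intro p q c h1 h2
    exact (aux15_cut_head_in_unique hconn h4 h1.1 h2.1.1).symm
  have hout : ∀ ⦃p q c⦄, lonelyRel E r p q → lonelyRel E r p c → q = c := by
    intro p q c h1 h2
    exact (h1.2 c h2.1).symm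
  -- vertices in the same bag are comparable along lonely cut-edge chains
  have hcompB : Relation.ReflTransGen (lonelyRel E r) y y' ∨
      Relation.ReflTransGen (lonelyRel E r) y' y := by
    have he : Relation.EqvGen (lonelyRel E r) y y' :=
      Quotient.exact (hy.trans hy'.symm : cmk (lonelyRel E r) y = cmk (lonelyRel E r) y')
    exact aux15_eqvGen_comparable hin hout he
  have hcompA : Relation.ReflTransGen (lonelyRel E r) x x' ∨
      Relation.ReflTransGen (lonelyRel E r) x' x := by
    have he : Relation.EqvGen (lonelyRel E r) x x' :=
      Quotient.exact (hx.trans hx'.symm : cmk (lonelyRel E r) x = cmk (lonelyRel E r) x')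
    exact aux15_eqvGen_comparable hin hout he
  -- Step 1 : y = y'
  have hyy : y = y' := by
    by_contra hne
    rcases hcompB with hc | hc
    · rcases hc.cases_tail with rfl | ⟨w, _, hwy'⟩
      · exact hne rfl
      · -- y' is the head of a lonely cut-edge from w ∈ bag b, so x' = w
        have hx'w : x' = w := aux15_cut_head_in_unique hconn h4 hwy'.1 hxy'
        have hwbag : (cmk (lonelyRel E r) w : ContractedVert E r) = b := by
          have : cmk (lonelyRel E r) w = cmk (lonelyRel E r) y' :=
            Quotient.sound (Relation.EqvGen.rel _ _ hwy')
          rw [this]; exact hy'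
        exact hab (hx'.symm.trans (by rw [hx'w]; exact hwbag))
    · rcases hc.cases_tail with rfl | ⟨w, _, hwy⟩
      · exact hne rfl
      · have hxw : x = w := aux15_cut_head_in_unique hconn h4 hwy.1 hxy
        have hwbag : (cmk (lonelyRel E r) w : ContractedVert E r) = b := by
          have : cmk (lonelyRel E r) w = cmk (lonelyRel E r) y :=
            Quotient.sound (Relation.EqvGen.rel _ _ hwy)
          rw [this]; exact hy
        exact hab (hx.symm.trans (by rw [hxw]; exact hwbag))
  subst hyy
  -- Step 2 : x = x'
  refine ⟨?_, rfl⟩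
  by_contra hne
  rcases hcompA with hc | hc
  · -- chain from x to x'; apply Rule 4 to the arc (x', y)
    have hra : ReachAvoid E {v | E v y ∧ v ≠ x'} r x' := by
      by_contra hna
      exact h4 ⟨y, x', hxy', hna⟩
    obtain ⟨hrS, _, hwalk⟩ := hra
    rcases aux15_reach_chain hconn hc hwalk with rfl | hreach
    · exact hne rfl
    · exact aux15_end_not_mem hrS hreach ⟨hxy, hne⟩
  · have hra : ReachAvoid E {v | E v y ∧ v ≠ x} r x := by
      by_contra hna
      exact h4 ⟨y, x, hxy, hna⟩
    obtain ⟨hrS, _, hwalk⟩ := hra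
    rcases aux15_reach_chain hconn hc hwalk with rfl | hreach
    · exact hne rfl
    · exact aux15_end_not_mem hrS hreach ⟨hxy', fun h => hne h.symm⟩

end Aux15

/-- If reduction rules R1–R4 do not apply to the connected rooted digraph
`D` and two (distinct) bags `A`, `B` of `D_c` are linked, then `D` has exactly one edge
from `A` to `B` and exactly one edge from `B` to `A`. -/
theorem one_edge_between_linked_bags {V : Type} [Fintype V] (E : V → V → Prop) (r : V)
    (hroot : ∀ u, ¬ E u r) (hred : Reduced4 E r) :
    ∀ a b : ContractedVert E r, a ≠ b → LinkedBags E (bag E r a) (bag E r b) →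
      (∃! p : V × V, p.1 ∈ bag E r a ∧ p.2 ∈ bag E r b ∧ E p.1 p.2) ∧
      (∃! p : V × V, p.1 ∈ bag E r b ∧ p.2 ∈ bag E r a ∧ E p.1 p.2) := by
  obtain ⟨hconn, _, _, h4⟩ := hred
  intro a b hab hlink
  obtain ⟨⟨x, hx, y, hy, hxy⟩, ⟨p, hp, q, hq, hpq⟩⟩ := hlink
  constructor
  · refine ⟨(x, y), ⟨hx, hy, hxy⟩, ?_⟩
    rintro ⟨u, v⟩ ⟨hu, hv, huv⟩
    obtain ⟨h1, h2⟩ := aux15_unique_arc hconn h4 hab hu hv huv hx hy hxy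
    exact Prod.ext h1 h2
  · refine ⟨(p, q), ⟨hp, hq, hpq⟩, ?_⟩
    rintro ⟨u, v⟩ ⟨hu, hv, huv⟩
    obtain ⟨h1, h2⟩ := aux15_unique_arc hconn h4 (Ne.symm hab) hu hv huv hp hq hpq
    exact Prod.ext h1 h2


end OutBranching
end

section
/- Let D be a connected rooted digraph to which none of the reduction rules R1–R6 applies, and let S ⊆ V(D_c) be any set of vertices of the contracted graph D_c that contains the root and every special vertex of D_c. Then there exist weak bipaths P_1,…,P_q in D_c such that: (i) the sets of internal vertices of P_1,…,P_q form a partition of V(D_c) ∖ S; (ii) the two extremities of each P_i belong to S and are distinct; (iii) every out-neighbor of an internal vertex of P_i either lies on P_i or belongs to S. -/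
namespace OutBranching

variable {V : Type}

/-! ### Auxiliary lemmas on the original digraph -/

section DLevel

variable {V : Type} {E : V → V → Prop} {r : V}

theorem reaches_del_of_reaches {t h : V} (hreach : Reaches (delEdge E t h) r h) {w : V}
    (hw : Reaches E r w) : Reaches (delEdge E t h) r w := by
  induction hw with
  | refl => exact Relation.ReflTransGen.refl
  | @tail b c hab hbc ih =>
    by_cases hc : b = t ∧ c = h
    · exact hc.2 ▸ hreach
    · exact ih.tail ⟨hbc, hc⟩

/-- F1: if `(t,h)` is a cut-edge, then `h` is unreachable after deleting it. -/
theorem cutEdge_head_unreachable (hconn : Connected E r) {t h : V}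
    (hce : IsCutEdge E r t h) : ¬ Reaches (delEdge E t h) r h := by
  intro hreach
  obtain ⟨_, w, hw⟩ := hce
  exact hw (reaches_del_of_reaches hreach (hconn w))

/-- cut-edges are not loops -/
theorem cutEdge_ne (hconn : Connected E r) {t h : V} (hce : IsCutEdge E r t h) : t ≠ h := by
  intro heq
  subst heq
  have key : ∀ z, Reaches E r z → Reaches (delEdge E t t) r z := by
    intro z hz
    induction hz with
    | refl => exact Relation.ReflTransGen.refl
    | @tail b c hab hbc ih =>
      rcases Classical.em (b = t ∧ c = t) with ⟨rfl, rfl⟩ | hb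
      · exact ih
      · exact ih.tail ⟨hbc, hb⟩
  exact cutEdge_head_unreachable hconn hce (key t (hconn t))

/-- F2: the head of a cut-edge has a unique in-neighbour. -/
theorem cutEdge_in_unique (hconn : Connected E r) (hR4 : Rule4NA E r) {t h : V}
    (hce : IsCutEdge E r t h) : ∀ x, E x h → x = t := by
  intro x hx
  by_contra hxt
  apply hR4
  refine ⟨h, x, hx, ?_⟩
  rintro ⟨hrS, hxS, hpath⟩
  have hgen : ∀ z, Relation.ReflTransGen
      (fun a b => E a b ∧ a ∉ {v | E v h ∧ v ≠ x} ∧ b ∉ {v | E v h ∧ v ≠ x}) r z →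
      Reaches (delEdge E t h) r z := by
    intro z hz
    induction hz with
    | refl => exact Relation.ReflTransGen.refl
    | tail hab hbc ih =>
      refine ih.tail ⟨hbc.1, ?_⟩
      rintro ⟨rfl, rfl⟩
      exact hbc.2.1 ⟨hce.1, fun hth => hxt hth.symm⟩
  have : Reaches (delEdge E t h) r h :=
    (hgen x hpath).tail ⟨hx, fun hc => hxt hc.1⟩
  exact cutEdge_head_unreachable hconn hce this

/-- out-neighbours of the root have the root as unique in-neighbour. -/
theorem root_in_unique (hR4 : Rule4NA E r) {x y : V} (hrx : E r x) (hyx : E y x) : y = r := by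
  by_contra hyr
  exact hR4 ⟨x, y, hyx, fun hra => hra.1 ⟨hrx, fun hh => hyr hh.symm⟩⟩

/-- a vertex with a unique in-edge yields a cut-edge. -/
theorem cutEdge_of_unique_in (hroot : ∀ u, ¬ E u r) {x y : V} (hxr : x ≠ r) (hyx : E y x)
    (huniq : ∀ z, E z x → z = y) (hyxne : y ≠ x) : IsCutEdge E r y x := by
  refine ⟨hyx, x, fun hreach => ?_⟩
  have key : ∀ z, Reaches (delEdge E y x) r z → z ≠ x := by
    intro z hz
    induction hz with
    | refl => exact fun hh => hxr hh.symm
    | tail hab hbc ih =>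
      rintro rfl
      exact hbc.2 ⟨huniq _ hbc.1, rfl⟩
  exact key x hreach rfl

/-- the head of a cut-edge is not a cut-vertex. -/
theorem head_not_cutVertex (hconn : Connected E r) (hR2 : Rule2NA E r) (hR4 : Rule4NA E r)
    {t h : V} (hce : IsCutEdge E r t h) : ¬ IsCutVertex E r h :=
  fun hcv => (hR2 h hcv).1 ⟨t, hce.1, fun y hy => cutEdge_in_unique hconn hR4 hce y hy⟩

/-- no two consecutive cut-edges `t→h`, `h→g` with the first one having head `h`. -/
theorem cutEdge_no_chain (hconn : Connected E r) (hR2 : Rule2NA E r) (hR4 : Rule4NA E r)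
    (hroot : ∀ u, ¬ E u r) {t h g : V} (h1 : IsCutEdge E r t h) (h2 : IsCutEdge E r h g) :
    False := by
  apply head_not_cutVertex hconn hR2 hR4 h1
  refine ⟨fun hh => hroot t (hh ▸ h1.1), g, (cutEdge_ne hconn h2).symm, ?_⟩
  rintro ⟨_, hgS, hpath⟩
  have key : ∀ z, Relation.ReflTransGen
      (fun a b => E a b ∧ a ∉ ({h} : Set V) ∧ b ∉ ({h} : Set V)) r z → z ≠ g := by
    intro z hz
    induction hz with
    | refl => exact fun hh => hroot h (hh ▸ h2.1)
    | tail hab hbc ih =>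
      rintro rfl
      exact hbc.2.1 (cutEdge_in_unique hconn hR4 h2 _ hbc.1)
  exact key g hpath rfl

theorem lonely_tail_unique {t h h' : V} (h1 : IsLonelyCutEdge E r t h)
    (h2 : IsLonelyCutEdge E r t h') : h = h' :=
  h2.2 h h1.1

theorem lonely_head_unique (hconn : Connected E r) (hR4 : Rule4NA E r) {t t' h : V}
    (h1 : IsLonelyCutEdge E r t h) (h2 : IsLonelyCutEdge E r t' h) : t = t' :=
  (cutEdge_in_unique hconn hR4 h1.1 t' h2.1.1).symm

/-- classification of the contraction equivalence classes -/
theorem cmk_eq_iff (hconn : Connected E r) (hR2 : Rule2NA E r) (hR4 : Rule4NA E r)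
    (hroot : ∀ u, ¬ E u r) (x y : V) :
    cmk (lonelyRel E r) x = cmk (lonelyRel E r) y ↔
      (x = y ∨ lonelyRel E r x y ∨ lonelyRel E r y x) := by
  constructor
  · intro hq
    have hgen : Relation.EqvGen (lonelyRel E r) x y := Quotient.eq''.mp hq
    clear hq
    induction hgen with
    | rel a b hab => exact Or.inr (Or.inl hab)
    | refl a => exact Or.inl rfl
    | symm a b _ ih =>
      rcases ih with rfl | hl | hl
      · exact Or.inl rfl
      · exact Or.inr (Or.inr hl)
      · exact Or.inr (Or.inl hl)
    | trans a b c _ _ ih1 ih2 =>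
      rcases ih1 with rfl | hab | hba
      · exact ih2
      · rcases ih2 with rfl | hbc | hcb
        · exact Or.inr (Or.inl hab)
        · exact absurd (cutEdge_no_chain hconn hR2 hR4 hroot hab.1 hbc.1) not_false
        · exact Or.inl (lonely_head_unique hconn hR4 hab hcb)
      · rcases ih2 with rfl | hbc | hcb
        · exact Or.inr (Or.inr hba)
        · exact Or.inl (lonely_tail_unique hba hbc)
        · exact absurd (cutEdge_no_chain hconn hR2 hR4 hroot hcb.1 hba.1) not_false
  · rintro (rfl | hl | hl)
    · rfl
    · exact Quotient.sound (Relation.EqvGen.rel _ _ hl)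
    · exact (Quotient.sound (Relation.EqvGen.rel _ _ hl)).symm

/-- every bag has a unique entry vertex. -/
theorem bag_entry (hconn : Connected E r) (hR2 : Rule2NA E r) (hR4 : Rule4NA E r)
    (hroot : ∀ u, ¬ E u r) (x : V) :
    ∃ g : V, cmk (lonelyRel E r) g = cmk (lonelyRel E r) x ∧
      ∀ a b, E a b → cmk (lonelyRel E r) b = cmk (lonelyRel E r) x →
        cmk (lonelyRel E r) a ≠ cmk (lonelyRel E r) x → b = g := by
  by_cases hh : ∃ t, lonelyRel E r t x
  · obtain ⟨t, ht⟩ := hh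
    refine ⟨t, (cmk_eq_iff hconn hR2 hR4 hroot t x).mpr (Or.inr (Or.inl ht)), ?_⟩
    intro a b hab hb ha
    rcases (cmk_eq_iff hconn hR2 hR4 hroot b x).mp hb with hbeq | hbx | hxb
    · have hat : a = t := cutEdge_in_unique hconn hR4 ht.1 a (hbeq ▸ hab)
      refine absurd ?_ ha
      rw [hat]
      exact (cmk_eq_iff hconn hR2 hR4 hroot t x).mpr (Or.inr (Or.inl ht))
    · exact lonely_head_unique hconn hR4 hbx ht
    · exact absurd (cutEdge_no_chain hconn hR2 hR4 hroot ht.1 hxb.1) not_false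
  · refine ⟨x, rfl, ?_⟩
    intro a b hab hb ha
    rcases (cmk_eq_iff hconn hR2 hR4 hroot b x).mp hb with hbeq | hbx | hxb
    · exact hbeq
    · exact absurd ⟨b, hbx⟩ hh
    · have hab' : a = x := cutEdge_in_unique hconn hR4 hxb.1 a hab
      refine absurd ?_ ha
      rw [hab']

/-- The master lemma: an in-closed region `Y` entered only from a bag `A` (whose entries all
land at `g`), with an edge from `Y` back to `g`, contradicts rule R4. -/
theorem master (hR4 : Rule4NA E r) (Y A : Set V) (g y1 : V)
    (hAY : ∀ v, v ∈ A → v ∉ Y) (hrA : r ∉ A) (hrY : r ∉ Y)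
    (hinY : ∀ a b, E a b → b ∈ Y → (a ∈ Y ∨ a ∈ A))
    (hinA : ∀ a b, E a b → b ∈ A → a ∉ A → b = g)
    (hy1 : y1 ∈ Y) (hgA : g ∈ A) (hedge : E y1 g) : False := by
  apply hR4
  refine ⟨g, y1, hedge, ?_⟩
  rintro ⟨hrS, hy1S, hpath⟩
  have key : ∀ z, Relation.ReflTransGen
      (fun a b => E a b ∧ a ∉ {v | E v g ∧ v ≠ y1} ∧ b ∉ {v | E v g ∧ v ≠ y1}) r z →
      z ∉ Y ∧ z ∉ A := by
    intro z hz
    induction hz with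
    | refl => exact ⟨hrY, hrA⟩
    | @tail b c hab hbc ih =>
      obtain ⟨he, hbS, _⟩ := hbc
      constructor
      · intro hcY
        rcases hinY _ _ he hcY with hbY | hbA
        · exact ih.1 hbY
        · exact ih.2 hbA
      · intro hcA
        have hcg : c = g := hinA _ _ he hcA ih.2
        subst hcg
        have hby : b = y1 := by
          by_contra hb
          exact hbS ⟨he, hb⟩
        exact ih.1 (hby ▸ hy1)
  exact (key y1 hpath).1 hy1

end DLevel

/-! ### Lemmas on the contracted digraph -/

section CLevel

variable {V : Type} {E : V → V → Prop} {r : V}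

theorem contracted_connected (hconn : Connected E r) :
    ∀ a : ContractedVert E r, Reaches (contractedE E r) (contractedRoot E r) a := by
  have key : ∀ x : V, Reaches E r x →
      Reaches (contractedE E r) (contractedRoot E r) (cmk (lonelyRel E r) x) := by
    intro x hx
    induction hx with
    | refl => exact Relation.ReflTransGen.refl
    | @tail b c hab hbc ih =>
      by_cases hbc' : cmk (lonelyRel E r) b = cmk (lonelyRel E r) c
      · exact hbc' ▸ ih
      · exact ih.tail ⟨hbc', b, c, rfl, rfl, hbc⟩
  intro a
  induction a using Quotient.ind with
  | _ x => exact key x (hconn x)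

theorem root_bag_trivial (hconn : Connected E r) (hR2 : Rule2NA E r) (hR4 : Rule4NA E r)
    (hroot : ∀ u, ¬ E u r) (hnl : ¬ ∃ h, lonelyRel E r r h) :
    ∀ x : V, cmk (lonelyRel E r) x = cmk (lonelyRel E r) r → x = r := by
  intro x hx
  rcases (cmk_eq_iff hconn hR2 hR4 hroot x r).mp hx with h | hl | hl
  · exact h
  · exact absurd hl.1.1 (hroot x)
  · exact absurd ⟨x, hl⟩ hnl

theorem lonely_root_out (hR4 : Rule4NA E r) (hroot : ∀ u, ¬ E u r)
    {h : V} (hl : lonelyRel E r r h) : ∀ x, E r x → x = h := by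
  intro x hx
  have hxr : x ≠ r := fun hh => hroot r (hh ▸ hx)
  have huniq : ∀ z, E z x → z = r := fun z hz => root_in_unique hR4 hx hz
  exact hl.2 x (cutEdge_of_unique_in hroot hxr hx huniq (Ne.symm hxr))

theorem lonely_root_all (hconn : Connected E r) (hR2 : Rule2NA E r) (hR4 : Rule4NA E r)
    (hroot : ∀ u, ¬ E u r) {h : V} (hl : lonelyRel E r r h) :
    ∀ v : V, v = r ∨ v = h := by
  intro v
  by_contra hv
  push_neg at hv
  apply head_not_cutVertex hconn hR2 hR4 hl.1
  refine ⟨fun hh => hroot r (hh ▸ hl.1.1), v, fun hvh => hv.2 hvh, ?_⟩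
  rintro ⟨_, _, hpath⟩
  have key : ∀ z, Relation.ReflTransGen
      (fun a b => E a b ∧ a ∉ ({h} : Set V) ∧ b ∉ ({h} : Set V)) r z → z = r := by
    intro z hz
    induction hz with
    | refl => rfl
    | @tail b c hab hbc ih =>
      exact absurd (Set.mem_singleton_iff.mpr
        (lonely_root_out hR4 hroot hl c (ih ▸ hbc.1))) hbc.2.2
  exact hv.1 (key v hpath)

theorem contracted_indeg (hconn : Connected E r) (hroot : ∀ u, ¬ E u r)
    (hR2 : Rule2NA E r) (hR4 : Rule4NA E r) [Finite V]
    (hnl : ¬ ∃ h, lonelyRel E r r h)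
    (S : Set (ContractedVert E r)) (hrootS : contractedRoot E r ∈ S)
    (hspS : sp (contractedE E r) ⊆ S) :
    ∀ w, w ∉ S → ∃ p q, p ≠ q ∧ (∀ z, contractedE E r z w ↔ z = p ∨ z = q) ∧
      contractedE E r w p ∧ contractedE E r w q := by
  intro w hwS
  haveI : Finite (ContractedVert E r) := Quotient.finite _
  have hsp : ¬ Special (contractedE E r) w := fun hs => hwS (hspS hs)
  have hbid : ∀ u, contractedE E r u w → contractedE E r w u := by
    intro u hu
    by_contra hwu
    exact hsp (Or.inr ⟨u, hu, hwu⟩)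
  have hcard : ¬ 3 ≤ (inN (contractedE E r) w).ncard := fun hc => hsp (Or.inl hc)
  have hwr : w ≠ contractedRoot E r := fun hh => hwS (hh ▸ hrootS)
  have hex : ∃ p, contractedE E r p w := by
    rcases (contracted_connected hconn w).cases_tail with heq | ⟨c, _, hc⟩
    · exact absurd heq hwr
    · exact ⟨c, hc⟩
  obtain ⟨p, hp⟩ := hex
  by_cases hq : ∃ q, contractedE E r q w ∧ q ≠ p
  · obtain ⟨q, hqw, hqp⟩ := hq
    refine ⟨p, q, Ne.symm hqp, ?_, hbid p hp, hbid q hqw⟩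
    intro z
    constructor
    · intro hz
      by_contra hzz
      push_neg at hzz
      apply hcard
      have hsub : ({p, q, z} : Set (ContractedVert E r)) ⊆ inN (contractedE E r) w := by
        intro v hv
        rcases hv with rfl | rfl | rfl
        exacts [hp, hqw, hz]
      have h3 : ({p, q, z} : Set (ContractedVert E r)).ncard = 3 :=
        Set.ncard_eq_three.mpr
          ⟨p, q, z, Ne.symm hqp, Ne.symm hzz.1, Ne.symm hzz.2, rfl⟩
      calc 3 = ({p, q, z} : Set (ContractedVert E r)).ncard := h3.symm
        _ ≤ _ := Set.ncard_le_ncard hsub (Set.toFinite _)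
    · rintro (rfl | rfl)
      exacts [hp, hqw]
  · push_neg at hq
    exfalso
    obtain ⟨hne, x, y, hx, hy, hexy⟩ := hbid p hp
    by_cases hpr : p = contractedRoot E r
    · have hyr : y = r := root_bag_trivial hconn hR2 hR4 hroot hnl y (by rw [hy, hpr]; rfl)
      exact hroot x (hyr ▸ hexy)
    · obtain ⟨g, hg, hentry⟩ := bag_entry hconn hR2 hR4 hroot y
      refine master hR4 {v | cmk (lonelyRel E r) v = w} {v | cmk (lonelyRel E r) v = p}
        g x ?_ ?_ ?_ ?_ ?_ hx ?_ ?_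
      · exact fun v hva hvy => hne ((Set.mem_setOf_eq ▸ hvy).symm.trans hva)
      · exact fun hra => hpr hra.symm
      · exact fun hry => hwr hry.symm
      · intro a b hab hb
        by_cases ha : cmk (lonelyRel E r) a = w
        · exact Or.inl ha
        · exact Or.inr (hq _ ⟨ha, a, b, rfl, hb, hab⟩)
      · intro a b hab hbA haA
        exact hentry a b hab (hbA.trans hy.symm) (fun hh => haA (hh.trans hy))
      · exact hg.trans hy
      · have hyg : y = g := hentry x y hexy rfl (by rw [hx, hy]; exact hne)
        exact hyg ▸ hexy

theorem no_lollipop (hconn : Connected E r) (hroot : ∀ u, ¬ E u r)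
    (hR2 : Rule2NA E r) (hR4 : Rule4NA E r)
    (hnl : ¬ ∃ h, lonelyRel E r r h)
    (S : Set (ContractedVert E r)) (hrootS : contractedRoot E r ∈ S)
    (k : ℕ) (c : ℕ → ContractedVert E r) (hk : 1 ≤ k)
    (hc0 : c 0 ∈ S) (hcS : ∀ i, 1 ≤ i → i ≤ k → c i ∉ S)
    (hcyc : c (k+1) = c 0)
    (hspec : ∀ i, 1 ≤ i → i ≤ k →
      (∀ z, contractedE E r z (c i) ↔ z = c (i-1) ∨ z = c (i+1)) ∧
      contractedE E r (c i) (c (i-1)) ∧ contractedE E r (c i) (c (i+1))) : False := by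
  have hedge1 : contractedE E r (c 1) (c 0) := by
    have := (hspec 1 le_rfl hk).2.1
    simpa using this
  obtain ⟨hne, x, y, hx, hy, hexy⟩ := hedge1
  by_cases hc0r : c 0 = contractedRoot E r
  · have hyr : y = r := root_bag_trivial hconn hR2 hR4 hroot hnl y (by rw [hy, hc0r]; rfl)
    exact hroot x (hyr ▸ hexy)
  · obtain ⟨g, hg, hentry⟩ := bag_entry hconn hR2 hR4 hroot y
    refine master hR4 {v | ∃ i, 1 ≤ i ∧ i ≤ k ∧ cmk (lonelyRel E r) v = c i}
      {v | cmk (lonelyRel E r) v = c 0} g x ?_ ?_ ?_ ?_ ?_ ⟨1, le_rfl, hk, hx⟩ ?_ ?_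
    · rintro v hva ⟨i, hi1, hik, hvi⟩
      exact hcS i hi1 hik ((hva.symm.trans hvi) ▸ hc0)
    · exact fun hra => hc0r (hra.symm)
    · rintro ⟨i, hi1, hik, hri⟩
      exact hcS i hi1 hik (hri ▸ hrootS)
    · rintro a b hab ⟨i, hi1, hik, hbi⟩
      by_cases ha : cmk (lonelyRel E r) a = c i
      · exact Or.inl ⟨i, hi1, hik, ha⟩
      · have hEa : contractedE E r (cmk (lonelyRel E r) a) (c i) := ⟨ha, a, b, rfl, hbi, hab⟩
        rcases ((hspec i hi1 hik).1 _).mp hEa with hprev | hnext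
        · rcases Nat.eq_or_lt_of_le hi1 with h1 | h1
          · refine Or.inr ?_
            rw [← h1] at hprev
            simp only [Nat.sub_self] at hprev
            exact hprev
          · exact Or.inl ⟨i - 1, by omega, by omega, hprev⟩
        · rcases Nat.eq_or_lt_of_le hik with hk1 | hk1
          · rw [hk1, hcyc] at hnext
            exact Or.inr hnext
          · exact Or.inl ⟨i + 1, by omega, by omega, hnext⟩
    · intro a b hab hbA haA
      exact hentry a b hab (hbA.trans hy.symm) (fun hh => haA (hh.trans hy))
    · exact hg.trans hy
    · have hxA : cmk (lonelyRel E r) x ≠ cmk (lonelyRel E r) y := by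
        rw [hx, hy]
        exact fun hh => (hcS 1 le_rfl hk) (hh ▸ hc0)
      have hyg : y = g := hentry x y hexy rfl hxA
      exact hyg ▸ hexy

end CLevel

/-! ### Abstract chain decomposition -/

section Chains

variable {W : Type} {E' : W → W → Prop} {r' : W} {S : Set W}

/-- A chain: a path `c 0, …, c (m+1)` whose endpoints are in `S` and whose internal
vertices are outside `S` with in-neighbourhood exactly the two neighbours on the chain. -/
def ChainSpec (E' : W → W → Prop) (S : Set W) (c : ℕ → W) (m : ℕ) : Prop :=
  1 ≤ m ∧ c 0 ∈ S ∧ c (m+1) ∈ S ∧ ∀ i, 1 ≤ i → i ≤ m →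
    (c i ∉ S ∧ c (i-1) ≠ c (i+1) ∧
     (∀ z, E' z (c i) ↔ z = c (i-1) ∨ z = c (i+1)) ∧
     E' (c i) (c (i-1)) ∧ E' (c i) (c (i+1)))

/-- No chain returns to its starting vertex. -/
def NoLollipop (E' : W → W → Prop) (S : Set W) : Prop :=
  ∀ (k : ℕ) (c : ℕ → W), 1 ≤ k → c 0 ∈ S → (∀ i, 1 ≤ i → i ≤ k → c i ∉ S) →
    c (k+1) = c 0 →
    (∀ i, 1 ≤ i → i ≤ k →
      (∀ z, E' z (c i) ↔ z = c (i-1) ∨ z = c (i+1)) ∧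
      E' (c i) (c (i-1)) ∧ E' (c i) (c (i+1))) → False

theorem chain_ends (HL : NoLollipop E' S) {c : ℕ → W} {m : ℕ} (h : ChainSpec E' S c m) :
    c 0 ≠ c (m+1) := by
  intro heq
  exact HL m c h.1 h.2.1 (fun i h1 h2 => (h.2.2.2 i h1 h2).1) heq.symm
    (fun i h1 h2 => ⟨(h.2.2.2 i h1 h2).2.2.1, (h.2.2.2 i h1 h2).2.2.2⟩)

theorem chain_inj (HL : NoLollipop E' S) {c : ℕ → W} {m : ℕ} (h : ChainSpec E' S c m) :
    ∀ i j, i < j → j ≤ m + 1 → c i ≠ c j := by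
  intro i
  induction i using Nat.strong_induction_on with
  | _ i ih =>
    intro j hij hj hceq
    rcases Nat.eq_zero_or_pos i with rfl | hi1
    · rcases eq_or_lt_of_le hj with rfl | hjm
      · exact chain_ends HL h hceq
      · exact (h.2.2.2 j (by omega) (by omega)).1 (hceq ▸ h.2.1)
    · have hjm : j ≤ m := by
        rcases eq_or_lt_of_le hj with rfl | hjm
        · exact absurd (hceq ▸ h.2.2.1) (h.2.2.2 i hi1 (by omega)).1
        · omega
      obtain ⟨hiS, hidist, hiiff, _, _⟩ := h.2.2.2 i hi1 (by omega)
      obtain ⟨hjS, hjdist, hjiff, hjp, hjn⟩ := h.2.2.2 j (by omega) hjm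
      have e1 : E' (c (i-1)) (c i) := (hiiff (c (i-1))).mpr (Or.inl rfl)
      have e2 : E' (c (i+1)) (c i) := (hiiff (c (i+1))).mpr (Or.inr rfl)
      rw [hceq] at e1 e2
      rcases (hjiff (c (i-1))).mp e1 with hA | hB
      · exact ih (i-1) (by omega) (j-1) (by omega) (by omega) hA
      · rcases (hjiff (c (i+1))).mp e2 with hC | hD
        · exact ih (i-1) (by omega) (j+1) (by omega) (by omega) hB
        · exact hidist (hB.trans hD.symm)

/-- connectivity through internal vertices -/
theorem chain_internal_connected {c : ℕ → W} {m : ℕ} (h : ChainSpec E' S c m)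
    {t : ℕ} (ht1 : 1 ≤ t) (htm : t ≤ m) :
    {z | Relation.ReflTransGen
        (fun x y => x ∉ S ∧ y ∉ S ∧ E' x y ∧ E' y x) (c t) z} =
      {z | ∃ i, 1 ≤ i ∧ i ≤ m ∧ c i = z} := by
  ext z
  simp only [Set.mem_setOf_eq]
  constructor
  · intro hz
    induction hz with
    | refl => exact ⟨t, ht1, htm, rfl⟩
    | @tail b c' hab hbc ihz =>
      obtain ⟨i, hi1, him, rfl⟩ := ihz
      obtain ⟨hbS, hcS, hEbc, hEcb⟩ := hbc
      rcases ((h.2.2.2 i hi1 him).2.2.1 c').mp hEcb with hh | hh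
      · refine ⟨i - 1, ?_, by omega, hh.symm⟩
        rcases Nat.eq_or_lt_of_le hi1 with h1 | h1
        · rw [← h1] at hh
          simp only [Nat.sub_self] at hh
          exact absurd (hh ▸ h.2.1) hcS
        · omega
      · refine ⟨i + 1, by omega, ?_, hh.symm⟩
        rcases Nat.eq_or_lt_of_le him with h1 | h1
        · rw [h1] at hh
          exact absurd (hh ▸ h.2.2.1) hcS
        · omega
  · rintro ⟨j, hj1, hjm, rfl⟩
    have hup : ∀ dlt, t + dlt ≤ m → Relation.ReflTransGen
        (fun x y => x ∉ S ∧ y ∉ S ∧ E' x y ∧ E' y x) (c t) (c (t + dlt)) := by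
      intro dlt
      induction dlt with
      | zero => exact fun _ => Relation.ReflTransGen.refl
      | succ dlt ihd =>
        intro hle
        refine (ihd (by omega)).tail ?_
        obtain ⟨hS1, _, _, _, hE1⟩ := h.2.2.2 (t + dlt) (by omega) (by omega)
        obtain ⟨hS2, _, _, hE2p, _⟩ := h.2.2.2 (t + dlt + 1) (by omega) (by omega)
        have hE2p' : E' (c (t + dlt + 1)) (c (t + dlt)) := by
          have := hE2p
          simpa using this
        exact ⟨hS1, hS2, hE1, hE2p'⟩
    have hdown : ∀ dlt, dlt ≤ t - 1 → Relation.ReflTransGen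
        (fun x y => x ∉ S ∧ y ∉ S ∧ E' x y ∧ E' y x) (c t) (c (t - dlt)) := by
      intro dlt
      induction dlt with
      | zero => exact fun _ => Relation.ReflTransGen.refl
      | succ dlt ihd =>
        intro hle
        refine (ihd (by omega)).tail ?_
        obtain ⟨hS1, _, _, hE1, _⟩ := h.2.2.2 (t - dlt) (by omega) (by omega)
        obtain ⟨hS2, _, _, _, hE2n⟩ := h.2.2.2 (t - dlt - 1) (by omega) (by omega)
        have e1 : E' (c (t - dlt)) (c (t - (dlt+1))) := by
          have := hE1
          rw [show t - dlt - 1 = t - (dlt + 1) from by omega] at this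
          exact this
        have e2 : E' (c (t - (dlt+1))) (c (t - dlt)) := by
          have := hE2n
          rw [show t - dlt - 1 = t - (dlt+1) from by omega,
              show t - (dlt+1) + 1 = t - dlt from by omega] at this
          exact this
        exact ⟨hS1, hS2, e1, e2⟩
    rcases le_or_gt t j with hle | hlt
    · have := hup (j - t) (by omega)
      rwa [show t + (j - t) = j from by omega] at this
    · have := hdown (t - j) (by omega)
      rwa [show t - (t - j) = j from by omega] at this

/-- two chains sharing an internal vertex have the same internal vertex set -/
theorem chain_same {c c' : ℕ → W} {m m' : ℕ} (h : ChainSpec E' S c m)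
    (h' : ChainSpec E' S c' m') {t t' : ℕ} (ht1 : 1 ≤ t) (htm : t ≤ m)
    (ht1' : 1 ≤ t') (htm' : t' ≤ m') (heq : c t = c' t') :
    {z | ∃ i, 1 ≤ i ∧ i ≤ m ∧ c i = z} = {z | ∃ i, 1 ≤ i ∧ i ≤ m' ∧ c' i = z} := by
  rw [← chain_internal_connected h ht1 htm, ← chain_internal_connected h' ht1' htm', heq]

end Chains

section Rays

variable {W : Type} [Finite W] {E' : W → W → Prop} {r' : W} {S : Set W}

/-- Walking away from a non-`S` vertex along in-neighbours reaches `S`. -/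
theorem ray_exists
    (Hdeg : ∀ w, w ∉ S → ∃ p q, p ≠ q ∧ (∀ z, E' z w ↔ z = p ∨ z = q) ∧ E' w p ∧ E' w q)
    (Hreach : ∀ a, Reaches E' r' a) (HrS : r' ∈ S) :
    ∀ a w : W, w ∉ S → E' a w →
    ∃ (n : ℕ) (d : ℕ → W), d 0 = w ∧ 1 ≤ n ∧ d n ∈ S ∧
      (∀ k, k < n → d k ∉ S) ∧
      (∀ k, 1 ≤ k → k < n →
        (d (k-1) ≠ d (k+1) ∧ (∀ z, E' z (d k) ↔ z = d (k-1) ∨ z = d (k+1)) ∧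
         E' (d k) (d (k-1)) ∧ E' (d k) (d (k+1)))) ∧
      (a ≠ d 1 ∧ (∀ z, E' z w ↔ z = a ∨ z = d 1) ∧ E' w a ∧ E' w (d 1)) := by
  classical
  have hnxt : ∀ pc : W × W, ∃ nx : W, pc.2 ∉ S → E' pc.1 pc.2 →
      (nx ≠ pc.1 ∧ E' nx pc.2 ∧ E' pc.2 nx ∧ E' pc.2 pc.1 ∧
       ∀ z, E' z pc.2 ↔ z = pc.1 ∨ z = nx) := by
    rintro ⟨prev, cur⟩
    by_cases hc : cur ∉ S ∧ E' prev cur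
    · obtain ⟨p, q, hpq, hiff, hEp, hEq⟩ := Hdeg cur hc.1
      rcases (hiff prev).mp hc.2 with h1 | h1
      · subst h1
        exact ⟨q, fun _ _ => ⟨Ne.symm hpq, (hiff q).mpr (Or.inr rfl), hEq, hEp, hiff⟩⟩
      · subst h1
        exact ⟨p, fun _ _ => ⟨hpq, (hiff p).mpr (Or.inl rfl), hEp, hEq,
          fun z => (hiff z).trans or_comm⟩⟩
    · exact ⟨cur, fun h1 h2 => absurd ⟨h1, h2⟩ hc⟩
  choose nxt hnxtspec using hnxt
  intro a w hwS hEaw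
  set F : W × W → W × W := fun pc => (pc.2, nxt pc) with hF
  set st : ℕ → W × W := fun k => F^[k] (a, w) with hstdef
  set d : ℕ → W := fun k => (st k).2 with hddef
  have hFst : ∀ x, st (x+1) = F (st x) := fun x => Function.iterate_succ_apply' F x (a, w)
  have hstS : ∀ k, st (k+1) = (d k, nxt (st k)) := fun k => hFst k
  have hprv : ∀ k, (st (k+1)).1 = d k := fun k => by rw [hstS]
  have hdS : ∀ k, d (k+1) = nxt (st k) := fun k => by
    show (st (k+1)).2 = _
    rw [hstS]
  have hd0 : d 0 = w := rfl
  have inv : ∀ k, (∀ j, j < k → d j ∉ S) → E' (st k).1 (st k).2 := by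
    intro k
    induction k with
    | zero => exact fun _ => hEaw
    | succ k ih =>
      intro hj
      have hk : E' (st k).1 (st k).2 := ih (fun j hjk => hj j (Nat.lt_succ_of_lt hjk))
      have hkS : d k ∉ S := hj k (Nat.lt_succ_self k)
      have spec := hnxtspec (st k) hkS hk
      rw [hstS]
      exact spec.2.2.1
  have hterm : ∃ n, d n ∈ S := by
    by_contra hall
    push_neg at hall
    have hv : ∀ k, E' (st k).1 (st k).2 := fun k => inv k (fun j _ => hall j)
    have Finj : ∀ u v : W × W, u.2 ∉ S → E' u.1 u.2 → v.2 ∉ S → E' v.1 v.2 →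
        F u = F v → u = v := by
      intro u v hu1 hu2 hv1 hv2 hFeq
      have h2 : u.2 = v.2 := congrArg Prod.fst hFeq
      have hn : nxt u = nxt v := congrArg Prod.snd hFeq
      have su := hnxtspec u hu1 hu2
      have sv := hnxtspec v hv1 hv2
      rcases (sv.2.2.2.2 u.1).mp (h2 ▸ hu2) with h | h
      · exact Prod.ext h h2
      · exact absurd (h.trans hn.symm) (Ne.symm su.1)
    obtain ⟨i, j, hij, hsteq⟩ : ∃ i j : ℕ, i < j ∧ st i = st j := by
      obtain ⟨i, j, hne, heq⟩ := Finite.exists_ne_map_eq_of_infinite st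
      rcases hne.lt_or_gt with h | h
      exacts [⟨i, j, h, heq⟩, ⟨j, i, h, heq.symm⟩]
    have hback : ∀ t, t ≤ i → st (i - t) = st (j - t) := by
      intro t
      induction t with
      | zero => exact fun _ => by simpa using hsteq
      | succ t ihb =>
        intro ht
        have h1 := ihb (by omega)
        have hx : i - (t+1) + 1 = i - t := by omega
        have hy : j - (t+1) + 1 = j - t := by omega
        apply Finj _ _ (hall _) (hv _) (hall _) (hv _)
        rw [← hFst (i - (t+1)), ← hFst (j - (t+1)), hx, hy]
        exact h1
    have hper0 : st 0 = st (j - i) := by simpa using hback i le_rfl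
    have hd0' : 1 ≤ j - i := by omega
    have hkey : ∀ z, Reaches E' r' z → ∀ nn, z ≠ d nn := by
      intro z hz
      induction hz with
      | refl => exact fun nn h => hall nn (h ▸ HrS)
      | @tail b cc hab hbc ih =>
        have main : ∀ nn, 1 ≤ nn → cc ≠ d nn := by
          intro nn h1 hcc
          have spec := hnxtspec (st nn) (hall nn) (hv nn)
          have hb : E' b (d nn) := hcc ▸ hbc
          rcases (spec.2.2.2.2 b).mp hb with h | h
          · have hq : (st nn).1 = d (nn - 1) := by
              have := hprv (nn - 1)
              rwa [show nn - 1 + 1 = nn from by omega] at this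
            exact ih (nn-1) (h.trans hq)
          · exact ih (nn+1) (h.trans (hdS nn).symm)
        intro nn hcc
        rcases Nat.eq_zero_or_pos nn with rfl | h1
        · have h0 : d 0 = d (j - i) := by
            show (st 0).2 = (st (j-i)).2
            rw [hper0]
          exact main (j-i) hd0' (hcc.trans h0)
        · exact main nn h1 hcc
    exact hkey w (Hreach w) 0 rfl
  obtain ⟨n, hnS, hnmin⟩ : ∃ n, d n ∈ S ∧ ∀ k, k < n → d k ∉ S :=
    ⟨Nat.find hterm, Nat.find_spec hterm, fun k hk => Nat.find_min hterm hk⟩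
  have hn1 : 1 ≤ n := by
    rcases Nat.eq_zero_or_pos n with h0 | h
    · rw [h0] at hnS
      exact absurd hnS hwS
    · exact h
  refine ⟨n, d, rfl, hn1, hnS, hnmin, ?_, ?_⟩
  · intro k h1 hk
    have hkS : d k ∉ S := hnmin k hk
    have hvk : E' (st k).1 (st k).2 := inv k (fun j hj => hnmin j (by omega))
    have spec := hnxtspec (st k) hkS hvk
    have hp : (st k).1 = d (k-1) := by
      have := hprv (k - 1)
      rwa [show k - 1 + 1 = k from by omega] at this
    have hnx : nxt (st k) = d (k+1) := (hdS k).symm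
    rw [hp, hnx] at spec
    exact ⟨Ne.symm spec.1, spec.2.2.2.2, spec.2.2.2.1, spec.2.2.1⟩
  · have spec := hnxtspec (st 0) hwS hEaw
    have hnx : nxt (st 0) = d 1 := (hdS 0).symm
    rw [hnx] at spec
    exact ⟨Ne.symm spec.1, spec.2.2.2.2, spec.2.2.2.1, spec.2.2.1⟩

/-- every non-`S` vertex lies internally on some chain. -/
theorem chain_exists
    (Hdeg : ∀ w, w ∉ S → ∃ p q, p ≠ q ∧ (∀ z, E' z w ↔ z = p ∨ z = q) ∧ E' w p ∧ E' w q)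
    (Hreach : ∀ a, Reaches E' r' a) (HrS : r' ∈ S) :
    ∀ w, w ∉ S → ∃ (c : ℕ → W) (m t : ℕ), ChainSpec E' S c m ∧ 1 ≤ t ∧ t ≤ m ∧ c t = w := by
  intro w hwS
  obtain ⟨p, q, hpq, hiff, hEp, hEq⟩ := Hdeg w hwS
  have hpw : E' p w := (hiff p).mpr (Or.inl rfl)
  have hqw : E' q w := (hiff q).mpr (Or.inr rfl)
  -- ray to the right: previous vertex q, so the walk goes to p's side
  obtain ⟨nR, dR, hR0, hR1, hRS, hRmin, hRspec, hRjun⟩ := ray_exists Hdeg Hreach HrS q w hwS hqw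
  obtain ⟨nL, dL, hL0, hL1, hLS, hLmin, hLspec, hLjun⟩ := ray_exists Hdeg Hreach HrS p w hwS hpw
  set c : ℕ → W := fun i => if i ≤ nL then dL (nL - i) else dR (i - nL) with hc
  have hcL : ∀ i, i ≤ nL → c i = dL (nL - i) := fun i hi => by simp [hc, hi]
  have hcR : ∀ i, nL < i → c i = dR (i - nL) := fun i hi => by
    simp [hc, Nat.not_le.mpr hi]
  have hcw : c nL = w := by rw [hcL nL le_rfl, Nat.sub_self, hL0]
  have hcjoin : ∀ i, nL ≤ i → c i = dR (i - nL) := by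
    intro i hi
    rcases eq_or_lt_of_le hi with rfl | h
    · rw [hcw, Nat.sub_self, hR0]
    · exact hcR i h
  refine ⟨c, nL + nR - 1, nL, ?_, hL1, by omega, hcw⟩
  -- dL 1 = the other in-neighbour: it is the q-side? NO: ray from (p, w) has next ≠ p, so dL 1 = q
  have hLq : dL 1 = q := by
    rcases (hiff (dL 1)).mp ((hLjun.2.1 (dL 1)).mpr (Or.inr rfl)) with h | h
    · exact absurd h.symm hLjun.1
    · exact h
  have hRq : dR 1 = p := by
    rcases (hiff (dR 1)).mp ((hRjun.2.1 (dR 1)).mpr (Or.inr rfl)) with h | h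
    · exact h
    · exact absurd h.symm hRjun.1
  refine ⟨by omega, ?_, ?_, ?_⟩
  · -- c 0 ∈ S
    rw [hcL 0 (by omega), Nat.sub_zero]
    exact hLS
  · -- c (m+1) ∈ S
    rw [hcjoin (nL + nR - 1 + 1) (by omega), show nL + nR - 1 + 1 - nL = nR from by omega]
    exact hRS
  · intro i hi1 him
    rcases lt_trichotomy i nL with hlt | heq | hgt
    · -- left side : c i = dL (nL - i), internal index k = nL - i ∈ [1, nL-1]
      set k := nL - i with hk
      have hk1 : 1 ≤ k := by omega
      have hkn : k < nL := by omega
      obtain ⟨hd1, hd2, hd3, hd4⟩ := hLspec k hk1 hkn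
      have ha : c i = dL k := hcL i (by omega)
      have hb : c (i-1) = dL (k+1) := by
        rw [hcL (i-1) (by omega), show nL - (i-1) = k + 1 from by omega]
      have hcc : c (i+1) = dL (k-1) := by
        rw [hcL (i+1) (by omega), show nL - (i+1) = k - 1 from by omega]
      refine ⟨by rw [ha]; exact hLmin k hkn, ?_, ?_, ?_, ?_⟩
      · rw [hb, hcc]; exact (hd1).symm
      · intro z
        rw [ha, hb, hcc]
        exact (hd2 z).trans or_comm
      · rw [ha, hb]; exact hd4
      · rw [ha, hcc]; exact hd3
    · -- junction i = nL
      have hciw : c i = w := by rw [heq, hcw]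
      have hb : c (i-1) = dL 1 := by
        rw [hcL (i-1) (by omega), show nL - (i-1) = 1 from by omega]
      have hcc : c (i+1) = dR 1 := by
        rw [hcjoin (i+1) (by omega), show i + 1 - nL = 1 from by omega]
      refine ⟨by rw [hciw]; exact hwS, ?_, ?_, ?_, ?_⟩
      · rw [hb, hcc, hLq, hRq]; exact Ne.symm hpq
      · intro z
        rw [hciw, hb, hcc, hLq, hRq]
        exact (hiff z).trans or_comm
      · rw [hciw, hb, hLq]; exact hEq
      · rw [hciw, hcc, hRq]; exact hEp
    · -- right side : c i = dR (i - nL), internal index k = i - nL ∈ [1, nR-1]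
      set k := i - nL with hk
      have hk1 : 1 ≤ k := by omega
      have hkn : k < nR := by omega
      obtain ⟨hd1, hd2, hd3, hd4⟩ := hRspec k hk1 hkn
      have ha : c i = dR k := hcR i hgt
      have hb : c (i-1) = dR (k-1) := by
        rw [hcjoin (i-1) (by omega), show i - 1 - nL = k - 1 from by omega]
      have hcc : c (i+1) = dR (k+1) := by
        rw [hcR (i+1) (by omega), show i + 1 - nL = k + 1 from by omega]
      refine ⟨by rw [ha]; exact hRmin k hkn, ?_, ?_, ?_, ?_⟩
      · rw [hb, hcc]; exact hd1
      · intro z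
        rw [ha, hb, hcc]
        exact hd2 z
      · rw [ha, hb]; exact hd3
      · rw [ha, hcc]; exact hd4

end Rays

section Build

variable {W : Type} [Finite W] {E' : W → W → Prop} {r' : W} {S : Set W}

/-- Turn a chain into a weak bipath. -/
noncomputable def ChainSpec.toBipath {c : ℕ → W} {m : ℕ} (h : ChainSpec E' S c m)
    (hinj : ∀ i j, i < j → j ≤ m + 1 → c i ≠ c j) : WeakBipath E' where
  len := m - 1
  u := fun j => c j.val
  inj := by
    intro a b hab
    by_contra hne
    have ha := a.isLt
    have hb := b.isLt
    have hm := h.1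
    rcases lt_or_gt_of_ne (fun hv : a.val = b.val => hne (Fin.ext hv)) with hl | hl
    · exact hinj a.val b.val hl (by omega) hab
    · exact hinj b.val a.val hl (by omega) hab.symm
  cond := by
    intro i j k hj hk
    have hik := k.isLt
    have hm := h.1
    obtain ⟨_, _, hiff, hEp, hEn⟩ := h.2.2.2 i.val (by omega) (by omega)
    have hj' : c (i.val - 1) = c j.val := by rw [show i.val - 1 = j.val from by omega]
    have hk' : c (i.val + 1) = c k.val := by rw [show i.val + 1 = k.val from by omega]
    rw [hj'] at hiff hEp
    rw [hk'] at hiff hEn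
    exact ⟨hiff, hEp, hEn⟩

theorem ChainSpec.toBipath_internal {c : ℕ → W} {m : ℕ} (h : ChainSpec E' S c m)
    (hinj : ∀ i j, i < j → j ≤ m + 1 → c i ≠ c j) :
    (h.toBipath hinj).internal = {z | ∃ i, 1 ≤ i ∧ i ≤ m ∧ c i = z} := by
  have hm : 1 ≤ m := h.1
  ext z
  simp only [WeakBipath.internal, ChainSpec.toBipath, Set.mem_setOf_eq]
  constructor
  · rintro ⟨i, h0, h2, rfl⟩
    have hh2 : i.val < m - 1 + 2 := h2
    exact ⟨i.val, by omega, by omega, rfl⟩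
  · rintro ⟨i, h1, h2, rfl⟩
    exact ⟨⟨i, by omega⟩, (show 0 < i by omega), (show i < m - 1 + 2 by omega), rfl⟩

theorem ChainSpec.toBipath_first {c : ℕ → W} {m : ℕ} (h : ChainSpec E' S c m)
    (hinj : ∀ i j, i < j → j ≤ m + 1 → c i ≠ c j) :
    (h.toBipath hinj).first = c 0 := rfl

theorem ChainSpec.toBipath_last {c : ℕ → W} {m : ℕ} (h : ChainSpec E' S c m)
    (hinj : ∀ i j, i < j → j ≤ m + 1 → c i ≠ c j) :
    (h.toBipath hinj).last = c (m+1) := by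
  have hm : 1 ≤ m := h.1
  show c ((Fin.last (m - 1 + 2)).val) = c (m+1)
  rw [Fin.val_last, show m - 1 + 2 = m + 1 from by omega]

theorem pure_decomposition
    (Hdeg : ∀ w, w ∉ S → ∃ p q, p ≠ q ∧ (∀ z, E' z w ↔ z = p ∨ z = q) ∧ E' w p ∧ E' w q)
    (Hreach : ∀ a, Reaches E' r' a) (HrS : r' ∈ S) (HL : NoLollipop E' S)
    (Hbid : ∀ x, x ∉ S → ∀ u, E' u x → E' x u) :
    ∃ (q : ℕ) (P : Fin q → WeakBipath E'),
      (∀ w, w ∉ S → ∃! i, w ∈ (P i).internal) ∧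
      (∀ i, ∀ w ∈ (P i).internal, w ∉ S) ∧
      (∀ i, (P i).first ∈ S ∧ (P i).last ∈ S ∧ (P i).first ≠ (P i).last) ∧
      (∀ i, ∀ w ∈ (P i).internal, ∀ x, E' w x → x ∈ Set.range (P i).u ∨ x ∈ S) := by
  classical
  set 𝒞 : Set (Set W) :=
    {Y | ∃ c m, ChainSpec E' S c m ∧ Y = {z | ∃ i, 1 ≤ i ∧ i ≤ m ∧ c i = z}} with h𝒞
  haveI : Finite ↥𝒞 := Subtype.finite
  obtain ⟨q, ⟨e⟩⟩ := Finite.exists_equiv_fin ↥𝒞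
  have hch : ∀ i : Fin q, ∃ cm : (ℕ → W) × ℕ, ChainSpec E' S cm.1 cm.2 ∧
      (e.symm i).1 = {z | ∃ j, 1 ≤ j ∧ j ≤ cm.2 ∧ cm.1 j = z} := by
    intro i
    obtain ⟨c, m, hcm, hY⟩ := (e.symm i).2
    exact ⟨(c, m), hcm, hY⟩
  choose cm hcm hYeq using hch
  set P : Fin q → WeakBipath E' := fun i => (hcm i).toBipath (chain_inj HL (hcm i)) with hP
  have hint : ∀ i, (P i).internal = {z | ∃ j, 1 ≤ j ∧ j ≤ (cm i).2 ∧ (cm i).1 j = z} :=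
    fun i => ChainSpec.toBipath_internal (hcm i) (chain_inj HL (hcm i))
  have hfst : ∀ i, (P i).first = (cm i).1 0 :=
    fun i => ChainSpec.toBipath_first (hcm i) (chain_inj HL (hcm i))
  have hlst : ∀ i, (P i).last = (cm i).1 ((cm i).2 + 1) :=
    fun i => ChainSpec.toBipath_last (hcm i) (chain_inj HL (hcm i))
  refine ⟨q, P, ?_, ?_, ?_, ?_⟩
  · -- existence and uniqueness
    intro w hwS
    obtain ⟨c, m, t, hcs, ht1, htm, hct⟩ := chain_exists Hdeg Hreach HrS w hwS
    have hYmem : {z | ∃ i, 1 ≤ i ∧ i ≤ m ∧ c i = z} ∈ 𝒞 := ⟨c, m, hcs, rfl⟩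
    set idx := e ⟨_, hYmem⟩ with hidx
    have hsymm : e.symm idx = ⟨_, hYmem⟩ := e.symm_apply_apply _
    refine ⟨idx, ?_, ?_⟩
    · show w ∈ (P idx).internal
      rw [hint]
      have heq1 : {z | ∃ j, 1 ≤ j ∧ j ≤ (cm idx).2 ∧ (cm idx).1 j = z} = (e.symm idx).1 :=
        (hYeq idx).symm
      rw [heq1, hsymm]
      exact ⟨t, ht1, htm, hct⟩
    · intro i' hw'
      replace hw' : w ∈ (P i').internal := hw'
      rw [hint] at hw'
      obtain ⟨j', hj1, hj2, hj3⟩ := hw'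
      have hsets : {z | ∃ i, 1 ≤ i ∧ i ≤ (cm i').2 ∧ (cm i').1 i = z} =
          {z | ∃ i, 1 ≤ i ∧ i ≤ m ∧ c i = z} :=
        chain_same (hcm i') hcs hj1 hj2 ht1 htm (hj3.trans hct.symm)
      apply e.symm.injective
      apply Subtype.ext
      rw [hsymm, hYeq i', hsets]
  · intro i w hw
    rw [hint] at hw
    obtain ⟨j, hj1, hj2, rfl⟩ := hw
    exact ((hcm i).2.2.2 j hj1 hj2).1
  · intro i
    rw [hfst, hlst]
    exact ⟨(hcm i).2.1, (hcm i).2.2.1, chain_ends HL (hcm i)⟩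
  · intro i w hw x hEwx
    rw [hint] at hw
    obtain ⟨j, hj1, hj2, rfl⟩ := hw
    by_cases hxS : x ∈ S
    · exact Or.inr hxS
    · have hxw : E' x ((cm i).1 j) := Hbid x hxS _ hEwx
      have hm1 := (hcm i).1
      have hlen : (P i).len = (cm i).2 - 1 := rfl
      rcases (((hcm i).2.2.2 j hj1 hj2).2.2.1 x).mp hxw with hh | hh
      · exact Or.inl ⟨⟨j - 1, by omega⟩, hh.symm⟩
      · exact Or.inl ⟨⟨j + 1, by omega⟩, hh.symm⟩

end Build

/-- If none of the reduction rules R1–R6 applies to the connected rooted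
digraph `D` and `S` is a set of vertices of `D_c` containing the root and all special
vertices of `D_c`, then there are weak bipaths `P₁,…,P_q` in `D_c` such that:
(i) their sets of internal vertices partition `V(D_c) ∖ S`;
(ii) the two extremities of each `Pᵢ` belong to `S` and are distinct;
(iii) every out-neighbor of an internal vertex of `Pᵢ` lies on `Pᵢ` or belongs to `S`. -/
theorem weak_bipath_decomposition {V : Type} [Fintype V] (E : V → V → Prop) (r : V)
    (hroot : ∀ u, ¬ E u r) (hconn : Connected E r) (hred : Reduced6 E r)
    (S : Set (ContractedVert E r))
    (hrootS : contractedRoot E r ∈ S)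
    (hspS : sp (contractedE E r) ⊆ S) :
    ∃ (q : ℕ) (P : Fin q → WeakBipath (contractedE E r)),
      (∀ w, w ∉ S → ∃! i, w ∈ (P i).internal) ∧
      (∀ i, ∀ w ∈ (P i).internal, w ∉ S) ∧
      (∀ i, (P i).first ∈ S ∧ (P i).last ∈ S ∧ (P i).first ≠ (P i).last) ∧
      (∀ i, ∀ w ∈ (P i).internal, ∀ x, contractedE E r w x →
          x ∈ Set.range (P i).u ∨ x ∈ S) := by
  obtain ⟨⟨_, hR2, _, hR4⟩, _, _⟩ := hred
  haveI : Finite (ContractedVert E r) := Quotient.finite _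
  by_cases hnl : ∃ h, lonelyRel E r r h
  · obtain ⟨h, hl⟩ := hnl
    have hall : ∀ a : ContractedVert E r, a = contractedRoot E r := by
      intro a
      induction a using Quotient.ind with
      | _ x =>
        rcases lonely_root_all hconn hR2 hR4 hroot hl x with rfl | rfl
        · rfl
        · exact Quotient.sound (Relation.EqvGen.symm _ _ (Relation.EqvGen.rel _ _ hl))
    refine ⟨0, Fin.elim0, ?_, ?_, ?_, ?_⟩
    · intro w hw
      exact absurd (by rw [hall w]; exact hrootS) hw
    · exact fun i => i.elim0
    · exact fun i => i.elim0
    · exact fun i => i.elim0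
  · have Hdeg := contracted_indeg hconn hroot hR2 hR4 hnl S hrootS hspS
    have Hreach := contracted_connected (E := E) (r := r) hconn
    have HL : NoLollipop (contractedE E r) S := by
      intro k c hk hc0 hcS hcyc hspec
      exact no_lollipop hconn hroot hR2 hR4 hnl S hrootS k c hk hc0 hcS hcyc hspec
    have Hbid : ∀ x, x ∉ S → ∀ u, contractedE E r u x → contractedE E r x u := by
      intro x hx u hu
      by_contra hxu
      exact hx (hspS (Or.inr ⟨u, hu, hxu⟩))
    exact pure_decomposition Hdeg Hreach hrootS HL Hbid

end OutBranching
end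

section
/- Let D be a connected rooted digraph to which reduction rules R1–R4 do not apply, let S be the set of lonely cut-edges of D, and let S' ⊆ S. Let D_1 be the rooted digraph obtained from D by contracting all edges of S'. Then D_1 contains no new cut-edge: every cut-edge of D_1 is the image under the contraction of a cut-edge of D. -/
namespace OutBranching

variable {V : Type}

section Aux

variable {E Q C : V → V → Prop} {r : V}

lemma aux_mono {Q Q' : V → V → Prop} (h : ∀ a b, Q a b → Q' a b) {x y : V}
    (hxy : Relation.ReflTransGen Q x y) : Relation.ReflTransGen Q' x y :=
  Relation.ReflTransGen.mono (fun a b hab => h a b hab) _ _ hxy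

lemma cuthead (hconn : Connected E r) {u v : V} (hcut : IsCutEdge E r u v) :
    ¬ Reaches (delEdge E u v) r v := by
  intro hv
  obtain ⟨_, w, hw⟩ := hcut
  have key : ∀ z, Reaches E r z → Reaches (delEdge E u v) r z := by
    intro z hz
    induction hz with
    | refl => exact Relation.ReflTransGen.refl
    | @tail p z hp hpz ih =>
      by_cases hc : p = u ∧ z = v
      · rw [hc.2]; exact hv
      · exact ih.tail ⟨hpz, hc⟩
  exact hw (key w (hconn w))

lemma use' (hQ : ∀ a b, Q a b → E a b) {c x z : V}
    (h : Relation.ReflTransGen Q r z) :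
    Reaches (delEdge E c x) r z ∨ (Relation.ReflTransGen Q r c ∧ Q c x) := by
  induction h with
  | refl => exact Or.inl Relation.ReflTransGen.refl
  | @tail p z hp hpz ih =>
    rcases ih with ih | ih
    · by_cases hc : p = c ∧ z = x
      · exact Or.inr ⟨hc.1 ▸ hp, by rw [← hc.1, ← hc.2]; exact hpz⟩
      · exact Or.inl (ih.tail ⟨hQ _ _ hpz, hc⟩)
    · exact Or.inr ih

lemma chainblock (hconn : Connected E r) (hCcut : ∀ u v, C u v → IsCutEdge E r u v)
    {t x : V} (hrt : r ≠ t) (hch : Relation.ReflTransGen C t x) :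
    ¬ Relation.ReflTransGen (fun p q => E p q ∧ q ≠ t) r x := by
  induction hch with
  | refl =>
    intro hw
    rcases Relation.ReflTransGen.cases_tail hw with h | ⟨p, _, hpt⟩
    · exact hrt h.symm
    · exact hpt.2 rfl
  | @tail c x hch' hcx ih =>
    intro hw
    rcases use' (E := E) (fun a b h => h.1) (c := c) (x := x) hw with h | h
    · exact cuthead hconn (hCcut c x hcx) h
    · exact ih h.1

lemma splitv (v : V) {z : V} (h : Relation.ReflTransGen Q r z) :
    Relation.ReflTransGen (fun p q => Q p q ∧ q ≠ v) r z ∨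
      ∃ p, Relation.ReflTransGen (fun p q => Q p q ∧ q ≠ v) r p ∧ Q p v := by
  induction h with
  | refl => exact Or.inl Relation.ReflTransGen.refl
  | @tail p z hp hpz ih =>
    rcases ih with ih | ih
    · by_cases hz : z = v
      · exact Or.inr ⟨p, ih, hz ▸ hpz⟩
      · exact Or.inl (ih.tail ⟨hpz, hz⟩)
    · exact Or.inr ih

lemma heads_unique (hconn : Connected E r) (hroot : ∀ u, ¬ E u r)
    {u₁ u₂ v : V} (h₁ : IsCutEdge E r u₁ v) (h₂ : IsCutEdge E r u₂ v) : u₁ = u₂ := by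
  by_contra hne
  have hv₁ := cuthead hconn h₁
  have hv₂ := cuthead hconn h₂
  have key : ∀ z, Reaches E r z →
      Relation.ReflTransGen (fun p q => E p q ∧ q ≠ v) r z := by
    intro z hz
    induction hz with
    | refl => exact Relation.ReflTransGen.refl
    | @tail p z hp hpz ih =>
      by_cases hzv : z = v
      · exfalso
        have ihd1 : Reaches (delEdge E u₁ v) r p :=
          aux_mono (fun a b h => ⟨h.1, fun hc => h.2 hc.2⟩) ih
        have ihd2 : Reaches (delEdge E u₂ v) r p :=
          aux_mono (fun a b h => ⟨h.1, fun hc => h.2 hc.2⟩) ih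
        by_cases hpu : p = u₁
        · exact hv₂ (hzv ▸ ihd2.tail ⟨hpz, fun hc => hne (hpu.symm.trans hc.1)⟩)
        · exact hv₁ (hzv ▸ ihd1.tail ⟨hpz, fun hc => hpu hc.1⟩)
      · exact ih.tail ⟨hpz, hzv⟩
  have hfin := key v (hconn v)
  rcases Relation.ReflTransGen.cases_tail hfin with h | ⟨c, _, hc⟩
  · exact hroot u₁ (h ▸ h₁.1)
  · exact hc.2 rfl

lemma no_cycle (hconn : Connected E r) (hroot : ∀ u, ¬ E u r)
    (hCcut : ∀ u v, C u v → IsCutEdge E r u v) {t y : V}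
    (hty : C t y) (hyt : Relation.ReflTransGen C y t) : False := by
  have hEty := (hCcut t y hty).1
  have hry : r ≠ y := fun h => hroot t (h ▸ hEty)
  have hblock := chainblock hconn hCcut hry hyt
  rcases splitv (Q := E) y (hconn t) with h | ⟨p, hp, hpy⟩
  · exact hblock h
  · by_cases hpt : p = t
    · exact hblock (hpt ▸ hp)
    · exact cuthead hconn (hCcut t y hty)
        ((aux_mono (fun a b h => ⟨h.1, fun hc => h.2 hc.2⟩) hp).tail
          ⟨hpy, fun hc => hpt hc.1⟩)

lemma join_in (hin : ∀ u₁ u₂ w, C u₁ w → C u₂ w → u₁ = u₂) {x y : V}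
    (h : Relation.ReflTransGen C x y) :
    ∀ {z}, Relation.ReflTransGen C z y →
      Relation.ReflTransGen C x z ∨ Relation.ReflTransGen C z x := by
  induction h with
  | refl => exact fun hz => Or.inr hz
  | @tail b y hxb hby ih =>
    intro z hzy
    rcases Relation.ReflTransGen.cases_tail hzy with h | ⟨c, hzc, hcy⟩
    · exact Or.inl (h ▸ hxb.tail hby)
    · exact ih (by rw [hin c b y hcy hby] at hzc; exact hzc)

lemma join_out (hout : ∀ u v₁ v₂, C u v₁ → C u v₂ → v₁ = v₂) {x : V} :
    ∀ {y : V}, Relation.ReflTransGen C y x → ∀ z, Relation.ReflTransGen C y z →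
      Relation.ReflTransGen C x z ∨ Relation.ReflTransGen C z x := by
  intro y h
  induction h using Relation.ReflTransGen.head_induction_on with
  | refl => exact fun z hz => Or.inl hz
  | @head y c hyc hcx ih =>
    intro z hyz
    rcases Relation.ReflTransGen.cases_head hyz with h | ⟨d, hyd, hdz⟩
    · exact Or.inr (by rw [← h]; exact Relation.ReflTransGen.head hyc hcx)
    · exact ih z (by rw [hout y c d hyc hyd]; exact hdz)

lemma comparable_of_eqvGen (hout : ∀ u v₁ v₂, C u v₁ → C u v₂ → v₁ = v₂)
    (hin : ∀ u₁ u₂ w, C u₁ w → C u₂ w → u₁ = u₂) {x y : V}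
    (h : Relation.EqvGen C x y) :
    Relation.ReflTransGen C x y ∨ Relation.ReflTransGen C y x := by
  induction h with
  | rel a b hab => exact Or.inl (Relation.ReflTransGen.single hab)
  | refl a => exact Or.inl Relation.ReflTransGen.refl
  | symm a b hab ih => exact ih.symm
  | trans a b c hab hbc ih1 ih2 =>
    rcases ih1 with h1 | h1 <;> rcases ih2 with h2 | h2
    · exact Or.inl (h1.trans h2)
    · exact join_in hin h1 h2
    · exact join_out hout h1 c h2
    · exact Or.inr (h2.trans h1)

lemma mono_avoid {v z : V} (hnv : ¬ Relation.ReflTransGen Q r v)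
    (h : Relation.ReflTransGen Q r z) :
    Relation.ReflTransGen (fun p q => Q p q ∧ q ≠ v) r z := by
  induction h with
  | refl => exact Relation.ReflTransGen.refl
  | @tail p z hp hpz ih => exact ih.tail ⟨hpz, fun hzv => hnv (hzv ▸ hp.tail hpz)⟩

end Aux

/-- If reduction rules R1–R4 do not apply to the connected rooted digraph
`D` and `D₁` is obtained from `D` by contracting a subset `C` of the lonely cut-edges,
then every cut-edge of `D₁` is the image under the contraction of a cut-edge of `D`. -/
theorem contract_lonely_no_new_cut_edges {V : Type} [Fintype V] (E : V → V → Prop) (r : V)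
    (hroot : ∀ u, ¬ E u r) (hred : Reduced4 E r)
    (C : V → V → Prop) (hC : ∀ u v, C u v → IsLonelyCutEdge E r u v) :
    ∀ a b : CVert C, IsCutEdge (contractE E C) (cmk C r) a b →
      ∃ x y, IsCutEdge E r x y ∧ cmk C x = a ∧ cmk C y = b := by
  classical
  obtain ⟨hconn, hR2, hR3, hR4⟩ := hred
  intro a b hcut
  obtain ⟨⟨hab, _⟩, wbar, hwbar⟩ := hcut
  have hCcut : ∀ u v, C u v → IsCutEdge E r u v := fun u v h => (hC u v h).1
  have hout : ∀ u v₁ v₂, C u v₁ → C u v₂ → v₁ = v₂ := fun u v₁ v₂ h1 h2 =>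
    ((hC u v₁ h1).2 v₂ (hCcut u v₂ h2)).symm
  have hin : ∀ u₁ u₂ v, C u₁ v → C u₂ v → u₁ = u₂ := fun u₁ u₂ v h1 h2 =>
    heads_unique hconn hroot (hCcut _ _ h1) (hCcut _ _ h2)
  obtain ⟨w, hwmk'⟩ := Quot.exists_rep wbar
  have hwmk : cmk C w = wbar := hwmk'
  -- projection of F-avoiding walks to the contraction minus (a,b)
  have proj : ∀ z, Relation.ReflTransGen
      (fun p q => E p q ∧ ¬ (cmk C p = a ∧ cmk C q = b)) r z →
      Reaches (delEdge (contractE E C) a b) (cmk C r) (cmk C z) := by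
    intro z h
    induction h with
    | refl => exact Relation.ReflTransGen.refl
    | @tail p z hp hpz ih =>
      by_cases hpq : cmk C p = cmk C z
      · rw [← hpq]; exact ih
      · exact ih.tail ⟨⟨hpq, p, z, rfl, rfl, hpz.1⟩, fun hcon => hpz.2 ⟨hcon.1, hcon.2⟩⟩
  have hR0w : ¬ Relation.ReflTransGen
      (fun p q => E p q ∧ ¬ (cmk C p = a ∧ cmk C q = b)) r w :=
    fun h => hwbar (hwmk ▸ proj w h)
  -- crossing lemma: any walk ends reachable-avoiding-F, or crosses into the bag of b
  have cross : ∀ (Q : V → V → Prop), (∀ p q, Q p q → E p q) → ∀ z,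
      Relation.ReflTransGen Q r z →
      Relation.ReflTransGen (fun p q => E p q ∧ ¬ (cmk C p = a ∧ cmk C q = b)) r z ∨
      ∃ q p, ¬ Relation.ReflTransGen
          (fun p q => E p q ∧ ¬ (cmk C p = a ∧ cmk C q = b)) r q ∧ cmk C q = b ∧
          Relation.ReflTransGen
            (fun p q => E p q ∧ ¬ (cmk C p = a ∧ cmk C q = b)) r p ∧ Q p q := by
    intro Q hQ z hz
    induction hz with
    | refl => exact Or.inl Relation.ReflTransGen.refl
    | @tail p z hp hpz ih =>
      rcases ih with ih | ih
      · by_cases hz0 : Relation.ReflTransGen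
            (fun p q => E p q ∧ ¬ (cmk C p = a ∧ cmk C q = b)) r z
        · exact Or.inl hz0
        · refine Or.inr ⟨z, p, hz0, ?_, ih, hpz⟩
          by_contra hzb
          exact hz0 (ih.tail ⟨hQ _ _ hpz, fun hcon => hzb hcon.2⟩)
      · exact Or.inr ih
  -- find an unreachable vertex in the bag of b
  obtain ⟨q0, p0, hq0, hq0b, -, -⟩ := (cross E (fun _ _ h => h) w (hconn w)).resolve_left hR0w
  -- a C-minimal such vertex y₀
  have hirr : ∀ s, ¬ Relation.TransGen C s s := by
    intro s hs
    obtain ⟨c, hsc, hcs⟩ := (Relation.TransGen.head'_iff).mp hs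
    exact no_cycle hconn hroot hCcut hsc hcs
  have hwfC : WellFounded C := by
    haveI : IsTrans V (Relation.TransGen C) := ⟨fun x y z h1 h2 => h1.trans h2⟩
    haveI : IsIrrefl V (Relation.TransGen C) := ⟨hirr⟩
    exact Subrelation.wf (fun {x y} h => Relation.TransGen.single h)
      (Finite.wellFounded_of_trans_of_irrefl _)
  obtain ⟨y₀, ⟨hy₀b, hy₀R⟩, hy₀min⟩ := hwfC.has_min
    {y | cmk C y = b ∧ ¬ Relation.ReflTransGen
      (fun p q => E p q ∧ ¬ (cmk C p = a ∧ cmk C q = b)) r y} ⟨q0, hq0b, hq0⟩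
  have hry₀ : r ≠ y₀ := fun h => hy₀R (h ▸ Relation.ReflTransGen.refl)
  have hnopred : ∀ t, ¬ C t y₀ := by
    intro t ht
    have htb : cmk C t = b := by
      have h1 : cmk C t = cmk C y₀ := Quotient.sound (Relation.EqvGen.rel _ _ ht)
      rw [h1, hy₀b]
    have htR : ¬ Relation.ReflTransGen
        (fun p q => E p q ∧ ¬ (cmk C p = a ∧ cmk C q = b)) r t :=
      fun h => hy₀R (h.tail ⟨(hCcut _ _ ht).1,
        fun hcon => hab (hcon.1.symm.trans htb)⟩)
    exact hy₀min t ⟨htb, htR⟩ ht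
  -- first arrival at y₀ must be from the bag of a
  have harr : ∀ p, Relation.ReflTransGen (fun p q => E p q ∧ q ≠ y₀) r p →
      E p y₀ → cmk C p = a := by
    intro p hwalk hpy
    by_contra hpa
    have hR0p : ¬ Relation.ReflTransGen
        (fun p q => E p q ∧ ¬ (cmk C p = a ∧ cmk C q = b)) r p :=
      fun h => hy₀R (h.tail ⟨hpy, fun hcon => hpa hcon.1⟩)
    obtain ⟨q, p', hqR, hqb, hp'R, hp'q⟩ :=
      (cross _ (fun _ _ h => h.1) p hwalk).resolve_left hR0p
    have hqy₀ : Relation.EqvGen C q y₀ := Quotient.exact (hqb.trans hy₀b.symm)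
    rcases comparable_of_eqvGen hout hin hqy₀ with h | h
    · rcases Relation.ReflTransGen.cases_tail h with h' | ⟨t, _, hty₀⟩
      · exact hp'q.2 h'.symm
      · exact hnopred t hty₀
    · have hwq : Relation.ReflTransGen (fun p q => E p q ∧ q ≠ y₀) r q :=
        (aux_mono (fun x y hh => ⟨hh.1.1, hh.2⟩) (mono_avoid hy₀R hp'R)).tail
          ⟨hp'q.1, hp'q.2⟩
      exact chainblock hconn hCcut hry₀ h hwq
  -- the first-arrival in-neighbour of y₀
  obtain ⟨pstar, hwstar, hEstar⟩ := (splitv (Q := E) y₀ (hconn y₀)).resolve_left (by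
    intro hcontra
    rcases Relation.ReflTransGen.cases_tail hcontra with h | ⟨c, _, hc⟩
    · exact hry₀ h.symm
    · exact hc.2 rfl)
  have hastar : cmk C pstar = a := harr _ hwstar hEstar
  refine ⟨pstar, y₀, ⟨hEstar, y₀, ?_⟩, hastar, hy₀b⟩
  intro hdel
  obtain h | ⟨p₂, hw₂, hstep₂⟩ := splitv (Q := delEdge E pstar y₀) y₀ hdel
  · rcases Relation.ReflTransGen.cases_tail h with h' | ⟨c, _, hc⟩
    · exact hry₀ h'.symm
    · exact hc.2 rfl
  · have hE₂ : E p₂ y₀ := hstep₂.1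
    have hne₂ : p₂ ≠ pstar := fun h => hstep₂.2 ⟨h, rfl⟩
    have hw₂' : Relation.ReflTransGen (fun p q => E p q ∧ q ≠ y₀) r p₂ :=
      aux_mono (fun x y hh => ⟨hh.1.1, hh.2⟩) hw₂
    have ha₂ : cmk C p₂ = a := harr _ hw₂' hE₂
    have hcomp := comparable_of_eqvGen hout hin
      (Quotient.exact (ha₂.trans hastar.symm) : Relation.EqvGen C p₂ pstar)
    have killer : ∀ t m, Relation.ReflTransGen C t m → t ≠ m →
        E t y₀ → E m y₀ → False := by
      intro t m hchain htm hEt hEm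
      have hra : ReachAvoid E {v | E v y₀ ∧ v ≠ m} r m := by
        by_contra h
        exact hR4 ⟨y₀, m, hEm, h⟩
      obtain ⟨hrS, hmS, hwalkS⟩ := hra
      have hrt : r ≠ t := fun h => hrS (by rw [h]; exact ⟨hEt, htm⟩)
      exact chainblock hconn hCcut hrt hchain
        (aux_mono (fun x y hh => ⟨hh.1, fun hy => hh.2.2 (by rw [hy]; exact ⟨hEt, htm⟩)⟩)
          hwalkS)
    rcases hcomp with h | h
    · exact killer p₂ pstar h hne₂ hE₂ hEstar
    · exact killer pstar p₂ h (Ne.symm hne₂) hEstar hE₂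

end OutBranching
end
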